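/- arXiv:math/0006118 — 4 statements merged into one kernel-verified Lean document; each statement's English description precedes it below -/
import Mathlib

section
/- There exists a universal constant ã > 0 (one may take ã = 2187) with the following property. For every integer n ≥ 3, every real c > 0, and every nonnegative integer k with k = (1/2) n log n − c n (equivalently, k < (1/2) n log n and c := ((1/2) n log n − k)/n), the k-fold convolution P^{*k} of the random-transposition measure P on S_n satisfies (1/2)(n!)^{1/2} ‖P^{*k} − U‖_2 ≥ ‖P^{*k} − U‖_TV ≥ 1 − ã e^{−2c}. -/
set_option maxHeartbeats 1000000

open Finset

open scoped Classical in
noncomputable def convPow {G : Type*} [Group G] [Fintype G] (P : G → ℝ) : ℕ → G → ℝ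
  | 0 => fun g => if g = 1 then 1 else 0
  | k + 1 => fun g => ∑ h : G, P (g * h⁻¹) * convPow P k h

noncomputable def tvDist {G : Type*} [Fintype G] (P Q : G → ℝ) : ℝ :=
  (1 / 2) * ∑ g : G, |P g - Q g|

noncomputable def l2Dist {G : Type*} [Fintype G] (P Q : G → ℝ) : ℝ :=
  Real.sqrt (∑ g : G, (P g - Q g) ^ 2)

open scoped Classical in
noncomputable def rtMeasure (n : ℕ) : Equiv.Perm (Fin n) → ℝ := fun π =>
  if π = 1 then 1 / n else if π.IsSwap then 2 / (n : ℝ) ^ 2 else 0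

noncomputable def uniformSn (n : ℕ) : Equiv.Perm (Fin n) → ℝ := fun _ => 1 / (n.factorial : ℝ)

namespace RT

open scoped Classical

open Equiv

variable {n : ℕ}

noncomputable def fixR (σ : Equiv.Perm (Fin n)) : ℝ := ∑ x : Fin n, if σ x = x then 1 else 0

lemma fixR_nonneg (σ : Equiv.Perm (Fin n)) : 0 ≤ fixR σ := by
  unfold fixR; positivity

lemma fixR_le (σ : Equiv.Perm (Fin n)) : fixR σ ≤ n := by
  unfold fixR
  calc ∑ x : Fin n, (if σ x = x then (1:ℝ) else 0) ≤ ∑ x : Fin n, 1 := by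
        apply Finset.sum_le_sum; intro i _; split <;> norm_num
    _ = n := by simp

lemma fixR_one : fixR (1 : Equiv.Perm (Fin n)) = n := by
  unfold fixR; simp

/-- swaps are parametrized 2:1 by offDiag pairs -/
lemma sum_offDiag_swap (φ : Equiv.Perm (Fin n) → ℝ) :
    ∑ p ∈ (univ : Finset (Fin n)).offDiag, φ (Equiv.swap p.1 p.2)
      = 2 * ∑ π ∈ univ.filter Equiv.Perm.IsSwap, φ π := by
  classical
  have hsplit : (univ : Finset (Fin n)).offDiag
      = ((univ : Finset (Fin n)).offDiag.filter (fun p => p.1 < p.2))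
        ∪ ((univ : Finset (Fin n)).offDiag.filter (fun p => p.2 < p.1)) := by
    rw [← Finset.filter_or]
    refine (Finset.filter_true_of_mem ?_).symm
    intro p hp
    rcases Finset.mem_offDiag.1 hp with ⟨-, -, hne⟩
    exact lt_or_gt_of_ne hne
  have hdisj : Disjoint ((univ : Finset (Fin n)).offDiag.filter (fun p => p.1 < p.2))
      ((univ : Finset (Fin n)).offDiag.filter (fun p => p.2 < p.1)) := by
    rw [Finset.disjoint_left]
    intro p hp1 hp2
    have h1 := (Finset.mem_filter.1 hp1).2
    have h2 := (Finset.mem_filter.1 hp2).2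
    exact absurd h2 (not_lt.2 h1.le)
  rw [hsplit, Finset.sum_union hdisj]
  have hflip : ∑ p ∈ ((univ : Finset (Fin n)).offDiag.filter (fun p => p.2 < p.1)),
      φ (Equiv.swap p.1 p.2)
      = ∑ p ∈ ((univ : Finset (Fin n)).offDiag.filter (fun p => p.1 < p.2)),
      φ (Equiv.swap p.1 p.2) := by
    apply Finset.sum_nbij' (fun p => (p.2, p.1)) (fun p => (p.2, p.1))
    · intro p hp
      simp only [Finset.mem_filter, Finset.mem_offDiag] at hp ⊢
      exact ⟨⟨hp.1.2.1, hp.1.1, hp.1.2.2.symm⟩, hp.2⟩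
    · intro p hp
      simp only [Finset.mem_filter, Finset.mem_offDiag] at hp ⊢
      exact ⟨⟨hp.1.2.1, hp.1.1, hp.1.2.2.symm⟩, hp.2⟩
    · intro p _; rfl
    · intro p _; rfl
    · intro p _; exact congrArg φ (Equiv.swap_comm _ _)
  rw [hflip, two_mul]
  have hmain : ∑ p ∈ ((univ : Finset (Fin n)).offDiag.filter (fun p => p.1 < p.2)),
      φ (Equiv.swap p.1 p.2) = ∑ π ∈ univ.filter Equiv.Perm.IsSwap, φ π := by
    apply Finset.sum_bij (fun p _ => Equiv.swap p.1 p.2)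
    · intro p hp
      simp only [Finset.mem_filter, Finset.mem_offDiag] at hp
      simp only [Finset.mem_filter, Finset.mem_univ, true_and]
      exact ⟨p.1, p.2, hp.2.ne, rfl⟩
    · intro p hp q hq heq
      simp only [Finset.mem_filter, Finset.mem_offDiag] at hp hq
      have hp2 : Equiv.swap q.1 q.2 p.1 = p.2 := by
        rw [← heq, Equiv.swap_apply_left]
      have : p.1 = q.1 ∧ p.2 = q.2 := by
        rcases eq_or_ne p.1 q.1 with h1 | h1
        · constructor
          · exact h1
          · rw [h1, Equiv.swap_apply_left] at hp2; exact hp2.symm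
        · rcases eq_or_ne p.1 q.2 with h2 | h2
          · rw [h2, Equiv.swap_apply_right] at hp2
            exact absurd (hp.2.trans_le (hp2 ▸ h2 ▸ hq.2.le)) (lt_irrefl _)
          · rw [Equiv.swap_apply_of_ne_of_ne h1 h2] at hp2
            exact absurd hp2 hp.2.ne
      exact Prod.ext this.1 this.2
    · intro π hπ
      simp only [Finset.mem_filter, Finset.mem_univ, true_and] at hπ
      obtain ⟨x, y, hxy, rfl⟩ := hπ
      rcases lt_or_gt_of_ne hxy with h | h
      · exact ⟨(x, y), by simp [Finset.mem_filter, Finset.mem_offDiag, hxy, h], rfl⟩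
      · exact ⟨(y, x), by simp [Finset.mem_filter, Finset.mem_offDiag, hxy.symm, h],
          Equiv.swap_comm _ _⟩
    · intro p _; rfl
  rw [hmain]


lemma isSwap_ne_one {π : Equiv.Perm (Fin n)} (h : π.IsSwap) : π ≠ 1 := by
  obtain ⟨x, y, hxy, rfl⟩ := h
  simpa [Equiv.swap_eq_one_iff] using hxy

/-- master decomposition of sums against rtMeasure -/
lemma sum_rt (φ : Equiv.Perm (Fin n) → ℝ) :
    ∑ π : Equiv.Perm (Fin n), rtMeasure n π * φ π
      = (1 / n) * φ 1 + (1 / (n : ℝ) ^ 2) *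
          ∑ p ∈ (univ : Finset (Fin n)).offDiag, φ (Equiv.swap p.1 p.2) := by
  classical
  rw [sum_offDiag_swap]
  rw [← Finset.sum_erase_add _ _ (Finset.mem_univ (1 : Equiv.Perm (Fin n)))]
  have h1 : rtMeasure n 1 * φ 1 = (1 / n) * φ 1 := by
    unfold rtMeasure; simp
  have h2 : ∑ π ∈ (univ : Finset (Equiv.Perm (Fin n))).erase 1, rtMeasure n π * φ π
      = ∑ π ∈ univ.filter Equiv.Perm.IsSwap, (2 / (n : ℝ) ^ 2) * φ π := by
    have e1 : ∑ π ∈ (univ : Finset (Equiv.Perm (Fin n))).erase 1, rtMeasure n π * φ π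
        = ∑ π ∈ (univ : Finset (Equiv.Perm (Fin n))).erase 1,
            (if π.IsSwap then (2 / (n : ℝ) ^ 2) * φ π else 0) := by
      apply Finset.sum_congr rfl
      intro π hπ
      have hne : π ≠ 1 := (Finset.mem_erase.1 hπ).1
      unfold rtMeasure
      rw [if_neg hne]
      split <;> simp
    rw [e1, Finset.sum_erase _ (by rw [if_neg (fun h => isSwap_ne_one h rfl)]),
      ← Finset.sum_filter]
  rw [h1, h2, ← Finset.mul_sum]
  ring


lemma sum_offDiag_eq (f : Fin n × Fin n → ℝ) :
    ∑ p ∈ (univ : Finset (Fin n)).offDiag, f p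
      = (∑ i : Fin n, ∑ j : Fin n, f (i, j)) - ∑ i : Fin n, f (i, i) := by
  classical
  have h : ∑ p ∈ (univ : Finset (Fin n)).diag, f p
      + ∑ p ∈ (univ : Finset (Fin n)).offDiag, f p
      = ∑ p ∈ (univ : Finset (Fin n)) ×ˢ univ, f p := by
    rw [← Finset.sum_union (Finset.disjoint_diag_offDiag _), Finset.diag_union_offDiag]
  have hdiag : ∑ p ∈ (univ : Finset (Fin n)).diag, f p = ∑ i : Fin n, f (i, i) := by
    apply Finset.sum_nbij' (fun p => p.1) (fun i => (i, i))
    · intro p hp; simp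
    · intro i _; simp [Finset.mem_diag]
    · intro p hp; rcases Finset.mem_diag.1 hp with ⟨-, h2⟩
      exact Prod.ext rfl h2
    · intro i _; rfl
    · intro p hp; rcases Finset.mem_diag.1 hp with ⟨-, h2⟩
      conv_lhs => rw [← Prod.mk.eta (p := p), ← h2]
  have hprod : ∑ p ∈ (univ : Finset (Fin n)) ×ˢ univ, f p
      = ∑ i : Fin n, ∑ j : Fin n, f (i, j) := Finset.sum_product _ _ _
  linarith [h, hdiag, hprod]

lemma sum_ind_fst (σ : Equiv.Perm (Fin n)) :
    ∑ p ∈ (univ : Finset (Fin n)).offDiag, (if σ p.1 = p.1 then (1:ℝ) else 0)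
      = ((n : ℝ) - 1) * fixR σ := by
  rw [sum_offDiag_eq]
  unfold fixR
  have h : ∀ x : Fin n, ∑ _y : Fin n, (if σ x = x then (1:ℝ) else 0)
      = (n : ℝ) * (if σ x = x then 1 else 0) := by
    intro x; rw [Finset.sum_const, Finset.card_univ, Fintype.card_fin, nsmul_eq_mul]
  rw [Finset.sum_congr rfl (fun x _ => h x), ← Finset.mul_sum]
  ring

lemma sum_ind_snd (σ : Equiv.Perm (Fin n)) :
    ∑ p ∈ (univ : Finset (Fin n)).offDiag, (if σ p.2 = p.2 then (1:ℝ) else 0)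
      = ((n : ℝ) - 1) * fixR σ := by
  rw [sum_offDiag_eq]
  unfold fixR
  rw [Finset.sum_comm]
  have h : ∀ x : Fin n, ∑ _y : Fin n, (if σ x = x then (1:ℝ) else 0)
      = (n : ℝ) * (if σ x = x then 1 else 0) := by
    intro x; rw [Finset.sum_const, Finset.card_univ, Fintype.card_fin, nsmul_eq_mul]
  rw [Finset.sum_congr rfl (fun x _ => h x), ← Finset.mul_sum]
  ring

lemma sum_ind_cross_fst (σ : Equiv.Perm (Fin n)) :
    ∑ p ∈ (univ : Finset (Fin n)).offDiag, (if σ p.1 = p.2 then (1:ℝ) else 0)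
      = (n : ℝ) - fixR σ := by
  rw [sum_offDiag_eq]
  unfold fixR
  have h : ∀ i : Fin n, ∑ j : Fin n, (if σ i = j then (1:ℝ) else 0) = 1 := by
    intro i
    simp
  rw [Finset.sum_congr rfl (fun i _ => h i)]
  simp

lemma sum_ind_cross_snd (σ : Equiv.Perm (Fin n)) :
    ∑ p ∈ (univ : Finset (Fin n)).offDiag, (if σ p.2 = p.1 then (1:ℝ) else 0)
      = (n : ℝ) - fixR σ := by
  rw [sum_offDiag_eq]
  unfold fixR
  rw [Finset.sum_comm]
  have h : ∀ j : Fin n, ∑ i : Fin n, (if σ j = i then (1:ℝ) else 0) = 1 := by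
    intro j
    simp
  rw [Finset.sum_congr rfl (fun j _ => h j)]
  simp


noncomputable def D (σ : Equiv.Perm (Fin n)) (i j : Fin n) : ℝ :=
  (if σ i = j then (1:ℝ) else 0) + (if σ j = i then 1 else 0)
    - (if σ i = i then 1 else 0) - (if σ j = j then 1 else 0)

lemma fixR_swap_mul (σ : Equiv.Perm (Fin n)) {i j : Fin n} (hij : i ≠ j) :
    fixR (Equiv.swap i j * σ) = fixR σ + D σ i j := by
  classical
  have key : fixR (Equiv.swap i j * σ)
      = ∑ x : Fin n, (if σ x = Equiv.swap i j x then (1:ℝ) else 0) := by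
    unfold fixR
    apply Finset.sum_congr rfl
    intro x _
    have : ((Equiv.swap i j * σ) x = x) ↔ (σ x = Equiv.swap i j x) := by
      rw [Equiv.Perm.mul_apply, Equiv.swap_apply_eq_iff]
    exact if_congr this rfl rfl
  rw [key]
  have split : ∀ w : Fin n → ℝ, ∑ x : Fin n, w x
      = w i + w j + ∑ x ∈ ((univ : Finset (Fin n)).erase i).erase j, w x := by
    intro w
    rw [← Finset.sum_erase_add _ _ (Finset.mem_univ i)]
    rw [← Finset.sum_erase_add _ _ (Finset.mem_erase.2 ⟨(Ne.symm hij), Finset.mem_univ j⟩)]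
    ring
  rw [split (fun x => if σ x = Equiv.swap i j x then (1:ℝ) else 0)]
  unfold fixR
  rw [split (fun x => if σ x = x then (1:ℝ) else 0)]
  have hrest : ∑ x ∈ ((univ : Finset (Fin n)).erase i).erase j,
      (if σ x = Equiv.swap i j x then (1:ℝ) else 0)
      = ∑ x ∈ ((univ : Finset (Fin n)).erase i).erase j, (if σ x = x then (1:ℝ) else 0) := by
    apply Finset.sum_congr rfl
    intro x hx
    have hxj : x ≠ j := (Finset.mem_erase.1 hx).1
    have hxi : x ≠ i := (Finset.mem_erase.1 (Finset.mem_erase.1 hx).2).1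
    rw [Equiv.swap_apply_of_ne_of_ne hxi hxj]
  rw [hrest, Equiv.swap_apply_left, Equiv.swap_apply_right]
  unfold D
  ring

lemma D_sq_le (σ : Equiv.Perm (Fin n)) {i j : Fin n} (hij : i ≠ j) :
    (D σ i j) ^ 2 ≤ 2 * ((if σ i = j then (1:ℝ) else 0) + (if σ j = i then 1 else 0)
      + (if σ i = i then 1 else 0) + (if σ j = j then 1 else 0)) := by
  classical
  unfold D
  by_cases h1 : σ i = j <;> by_cases h2 : σ j = i <;> by_cases h3 : σ i = i <;>
    by_cases h4 : σ j = j <;> simp [h1, h2, h3, h4, hij, Ne.symm hij] <;> norm_num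


lemma card_offDiag_real (hn : 0 < n) :
    (((univ : Finset (Fin n)).offDiag.card : ℝ)) = (n : ℝ) ^ 2 - n := by
  rw [Finset.offDiag_card]
  simp only [Finset.card_univ, Fintype.card_fin]
  have h : n ≤ n * n := Nat.le_mul_of_pos_left n hn
  push_cast [Nat.cast_sub h]
  ring

lemma sum_D (σ : Equiv.Perm (Fin n)) :
    ∑ p ∈ (univ : Finset (Fin n)).offDiag, D σ p.1 p.2
      = 2 * (n : ℝ) - 2 * n * fixR σ := by
  unfold D
  rw [Finset.sum_sub_distrib, Finset.sum_sub_distrib, Finset.sum_add_distrib,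
    sum_ind_cross_fst, sum_ind_cross_snd, sum_ind_fst, sum_ind_snd]
  ring

noncomputable def sInd (σ : Equiv.Perm (Fin n)) (i j : Fin n) : ℝ :=
  (if σ i = j then (1:ℝ) else 0) + (if σ j = i then 1 else 0)
    + (if σ i = i then 1 else 0) + (if σ j = j then 1 else 0)

lemma sum_sInd (σ : Equiv.Perm (Fin n)) :
    ∑ p ∈ (univ : Finset (Fin n)).offDiag, sInd σ p.1 p.2
      = 2 * ((n : ℝ) - fixR σ) + 2 * ((n : ℝ) - 1) * fixR σ := by
  unfold sInd
  rw [Finset.sum_add_distrib, Finset.sum_add_distrib, Finset.sum_add_distrib,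
    sum_ind_cross_fst, sum_ind_cross_snd, sum_ind_fst, sum_ind_snd]
  ring

lemma step_fix (hn : 0 < n) (σ : Equiv.Perm (Fin n)) :
    ∑ τ : Equiv.Perm (Fin n), rtMeasure n τ * fixR (τ * σ)
      = ((n : ℝ) - 2) / n * fixR σ + 2 / n := by
  rw [sum_rt (fun τ => fixR (τ * σ))]
  have h1 : fixR ((1 : Equiv.Perm (Fin n)) * σ) = fixR σ := by rw [one_mul]
  have hoff : ∑ p ∈ (univ : Finset (Fin n)).offDiag, fixR (Equiv.swap p.1 p.2 * σ)
      = ((n : ℝ) ^ 2 - n) * fixR σ + (2 * n - 2 * n * fixR σ) := by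
    have e : ∀ p ∈ (univ : Finset (Fin n)).offDiag,
        fixR (Equiv.swap p.1 p.2 * σ) = fixR σ + D σ p.1 p.2 := by
      intro p hp
      exact fixR_swap_mul σ (Finset.mem_offDiag.1 hp).2.2
    rw [Finset.sum_congr rfl e, Finset.sum_add_distrib, sum_D, Finset.sum_const,
      nsmul_eq_mul, card_offDiag_real hn]
  rw [h1, hoff]
  have hn' : (n : ℝ) ≠ 0 := Nat.cast_ne_zero.2 hn.ne'
  field_simp
  ring

lemma step_fix_sq (hn : 0 < n) (σ : Equiv.Perm (Fin n)) :
    ∑ τ : Equiv.Perm (Fin n), rtMeasure n τ * (fixR (τ * σ)) ^ 2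
      ≤ ((n : ℝ) - 4) / n * (fixR σ) ^ 2 + 8 / n * fixR σ + 4 / n := by
  rw [sum_rt (fun τ => (fixR (τ * σ)) ^ 2)]
  have h1 : (fixR ((1 : Equiv.Perm (Fin n)) * σ)) ^ 2 = (fixR σ) ^ 2 := by rw [one_mul]
  have hn' : (n : ℝ) ≠ 0 := Nat.cast_ne_zero.2 hn.ne'
  have hnpos : (0:ℝ) < n := by exact_mod_cast hn
  have hoff : ∑ p ∈ (univ : Finset (Fin n)).offDiag, (fixR (Equiv.swap p.1 p.2 * σ)) ^ 2
      ≤ ((n : ℝ) ^ 2 - n) * (fixR σ) ^ 2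
        + 2 * fixR σ * (2 * (n : ℝ) - 2 * n * fixR σ)
        + 2 * (2 * ((n : ℝ) - fixR σ) + 2 * ((n : ℝ) - 1) * fixR σ) := by
    have e : ∀ p ∈ (univ : Finset (Fin n)).offDiag,
        (fixR (Equiv.swap p.1 p.2 * σ)) ^ 2
          ≤ (fixR σ) ^ 2 + 2 * fixR σ * D σ p.1 p.2 + 2 * sInd σ p.1 p.2 := by
      intro p hp
      have hij := (Finset.mem_offDiag.1 hp).2.2
      rw [fixR_swap_mul σ hij]
      have := D_sq_le σ hij
      unfold sInd
      unfold D at this ⊢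
      nlinarith [this]
    calc ∑ p ∈ (univ : Finset (Fin n)).offDiag, (fixR (Equiv.swap p.1 p.2 * σ)) ^ 2
        ≤ ∑ p ∈ (univ : Finset (Fin n)).offDiag,
            ((fixR σ) ^ 2 + 2 * fixR σ * D σ p.1 p.2 + 2 * sInd σ p.1 p.2) :=
          Finset.sum_le_sum e
      _ = ((n : ℝ) ^ 2 - n) * (fixR σ) ^ 2
            + 2 * fixR σ * (2 * (n : ℝ) - 2 * n * fixR σ)
            + 2 * (2 * ((n : ℝ) - fixR σ) + 2 * ((n : ℝ) - 1) * fixR σ) := by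
          rw [Finset.sum_add_distrib, Finset.sum_add_distrib, Finset.sum_const,
            nsmul_eq_mul, card_offDiag_real hn, ← Finset.mul_sum, sum_D, ← Finset.mul_sum,
            sum_sInd]
  rw [h1]
  have hf : 0 ≤ fixR σ := fixR_nonneg σ
  have key : (1 / (n:ℝ)) * (fixR σ)^2
      + (1 / (n : ℝ)^2) * (((n : ℝ) ^ 2 - n) * (fixR σ) ^ 2
        + 2 * fixR σ * (2 * (n : ℝ) - 2 * n * fixR σ)
        + 2 * (2 * ((n : ℝ) - fixR σ) + 2 * ((n : ℝ) - 1) * fixR σ))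
      ≤ ((n : ℝ) - 4) / n * (fixR σ) ^ 2 + 8 / n * fixR σ + 4 / n := by
    have lhs_eq : (1 / (n:ℝ)) * (fixR σ)^2
        + (1 / (n : ℝ)^2) * (((n : ℝ) ^ 2 - n) * (fixR σ) ^ 2
          + 2 * fixR σ * (2 * (n : ℝ) - 2 * n * fixR σ)
          + 2 * (2 * ((n : ℝ) - fixR σ) + 2 * ((n : ℝ) - 1) * fixR σ))
        = ((n : ℝ) - 4) / n * (fixR σ) ^ 2 + (8 / n - 8 / n^2) * fixR σ + 4 / n := by
      field_simp
      ring
    rw [lhs_eq]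
    have h8 : (0:ℝ) ≤ 8 / (n:ℝ)^2 * fixR σ := by positivity
    nlinarith [h8]
  refine le_trans ?_ key
  have hmul : (0:ℝ) ≤ 1 / (n:ℝ)^2 := by positivity
  nlinarith [mul_le_mul_of_nonneg_left hoff hmul]


section Conv

variable {G : Type*} [Group G] [Fintype G]

lemma conv_exp (P : G → ℝ) (k : ℕ) (φ : G → ℝ) :
    ∑ g : G, convPow P (k + 1) g * φ g
      = ∑ h : G, convPow P k h * ∑ τ : G, P τ * φ (τ * h) := by
  classical
  show ∑ g : G, (∑ h : G, P (g * h⁻¹) * convPow P k h) * φ g = _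
  simp only [Finset.sum_mul]
  rw [Finset.sum_comm]
  apply Finset.sum_congr rfl
  intro h _
  rw [Finset.mul_sum]
  apply Fintype.sum_equiv (Equiv.mulRight h⁻¹)
  intro g
  simp only [Equiv.coe_mulRight, inv_mul_cancel_right]
  ring

lemma convPow_nonneg (P : G → ℝ) (hP : ∀ g, 0 ≤ P g) (k : ℕ) : ∀ g, 0 ≤ convPow P k g := by
  induction k with
  | zero => intro g; show (0:ℝ) ≤ if g = 1 then 1 else 0; split <;> norm_num
  | succ k ih =>
      intro g
      show (0:ℝ) ≤ ∑ h : G, P (g * h⁻¹) * convPow P k h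
      exact Finset.sum_nonneg fun h _ => mul_nonneg (hP _) (ih h)

lemma convPow_mass (P : G → ℝ) (hP : ∑ g : G, P g = 1) (k : ℕ) :
    ∑ g : G, convPow P k g = 1 := by
  classical
  induction k with
  | zero =>
      show ∑ g : G, (if g = 1 then (1:ℝ) else 0) = 1
      simp
  | succ k ih =>
      have h := conv_exp P k (fun _ => (1:ℝ))
      simp only [mul_one] at h
      rw [h]
      have h2 : ∀ h₀ : G, ∑ τ : G, P τ = 1 := fun _ => hP
      calc ∑ h₀ : G, convPow P k h₀ * ∑ τ : G, P τ
          = ∑ h₀ : G, convPow P k h₀ * 1 := by rw [hP]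
        _ = 1 := by simp only [mul_one]; exact ih

lemma convPow_exp_eq_one {P : G → ℝ} (hP : ∑ g : G, P g = 1) (k : ℕ) :
    ∑ g : G, convPow P k g * (1:ℝ) = 1 := by
  simp only [mul_one]; exact convPow_mass P hP k

end Conv

lemma rt_nonneg (π : Equiv.Perm (Fin n)) : 0 ≤ rtMeasure n π := by
  unfold rtMeasure
  split
  · positivity
  · split
    · positivity
    · exact le_refl 0

lemma rt_mass (hn : 0 < n) : ∑ π : Equiv.Perm (Fin n), rtMeasure n π = 1 := by
  have h := sum_rt (n := n) (fun _ => (1:ℝ))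
  simp only [mul_one] at h
  rw [h, Finset.sum_const, nsmul_eq_mul, card_offDiag_real hn]
  have hn' : (n : ℝ) ≠ 0 := Nat.cast_ne_zero.2 hn.ne'
  field_simp
  ring


noncomputable def Fm (n k : ℕ) : ℝ :=
  ∑ g : Equiv.Perm (Fin n), convPow (rtMeasure n) k g * fixR g

noncomputable def Sm (n k : ℕ) : ℝ :=
  ∑ g : Equiv.Perm (Fin n), convPow (rtMeasure n) k g * (fixR g) ^ 2

lemma Fm_zero : Fm n 0 = n := by
  unfold Fm
  simp only [convPow]
  rw [Finset.sum_eq_single (1 : Equiv.Perm (Fin n))]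
  · rw [if_pos rfl, one_mul, fixR_one]
  · intro g _ hg; rw [if_neg hg, zero_mul]
  · intro h; exact absurd (Finset.mem_univ _) h

lemma Sm_zero : Sm n 0 = (n : ℝ) ^ 2 := by
  unfold Sm
  simp only [convPow]
  rw [Finset.sum_eq_single (1 : Equiv.Perm (Fin n))]
  · rw [if_pos rfl, one_mul, fixR_one]
  · intro g _ hg; rw [if_neg hg, zero_mul]
  · intro h; exact absurd (Finset.mem_univ _) h

lemma Fm_succ (hn : 0 < n) (k : ℕ) :
    Fm n (k + 1) = ((n : ℝ) - 2) / n * Fm n k + 2 / n := by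
  unfold Fm
  rw [conv_exp]
  have e : ∀ h : Equiv.Perm (Fin n),
      convPow (rtMeasure n) k h * (∑ τ : Equiv.Perm (Fin n), rtMeasure n τ * fixR (τ * h))
        = ((n : ℝ) - 2) / n * (convPow (rtMeasure n) k h * fixR h)
          + 2 / n * convPow (rtMeasure n) k h := by
    intro h; rw [step_fix hn h]; ring
  rw [Finset.sum_congr rfl (fun h _ => e h), Finset.sum_add_distrib, ← Finset.mul_sum,
    ← Finset.mul_sum, convPow_mass _ (rt_mass hn), mul_one]

lemma Fm_closed (hn : 0 < n) (k : ℕ) :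
    Fm n k = 1 + ((n : ℝ) - 1) * (((n : ℝ) - 2) / n) ^ k := by
  induction k with
  | zero => rw [Fm_zero]; simp
  | succ k ih =>
      rw [Fm_succ hn, ih]
      have hn' : (n : ℝ) ≠ 0 := Nat.cast_ne_zero.2 hn.ne'
      have hr : ((n : ℝ) - 2) / n + 2 / n = 1 := by
        rw [← add_div, sub_add_cancel, div_self hn']
      rw [pow_succ]
      linear_combination hr

lemma Sm_succ_le (hn : 0 < n) (k : ℕ) :
    Sm n (k + 1) ≤ ((n : ℝ) - 4) / n * Sm n k + 8 / n * Fm n k + 4 / n := by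
  unfold Sm Fm
  rw [conv_exp]
  have e : ∀ h : Equiv.Perm (Fin n),
      convPow (rtMeasure n) k h * (∑ τ : Equiv.Perm (Fin n), rtMeasure n τ * (fixR (τ * h)) ^ 2)
        ≤ convPow (rtMeasure n) k h
            * (((n : ℝ) - 4) / n * (fixR h) ^ 2 + 8 / n * fixR h + 4 / n) := by
    intro h
    exact mul_le_mul_of_nonneg_left (step_fix_sq hn h)
      (convPow_nonneg _ rt_nonneg k h)
  calc ∑ h : Equiv.Perm (Fin n),
        convPow (rtMeasure n) k h * (∑ τ : Equiv.Perm (Fin n), rtMeasure n τ * (fixR (τ * h)) ^ 2)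
      ≤ ∑ h : Equiv.Perm (Fin n), convPow (rtMeasure n) k h
          * (((n : ℝ) - 4) / n * (fixR h) ^ 2 + 8 / n * fixR h + 4 / n) :=
        Finset.sum_le_sum (fun h _ => e h)
    _ = ((n : ℝ) - 4) / n * (∑ h : Equiv.Perm (Fin n), convPow (rtMeasure n) k h * (fixR h) ^ 2)
          + 8 / n * (∑ h : Equiv.Perm (Fin n), convPow (rtMeasure n) k h * fixR h)
          + 4 / n * (∑ h : Equiv.Perm (Fin n), convPow (rtMeasure n) k h) := by
        rw [Finset.mul_sum, Finset.mul_sum, Finset.mul_sum, ← Finset.sum_add_distrib,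
          ← Finset.sum_add_distrib]
        apply Finset.sum_congr rfl
        intro h _
        ring
    _ = ((n : ℝ) - 4) / n * (∑ h : Equiv.Perm (Fin n), convPow (rtMeasure n) k h * (fixR h) ^ 2)
          + 8 / n * (∑ h : Equiv.Perm (Fin n), convPow (rtMeasure n) k h * fixR h) + 4 / n := by
        rw [convPow_mass _ (rt_mass hn), mul_one]

lemma var_nonneg (hn : 0 < n) (k : ℕ) : (Fm n k) ^ 2 ≤ Sm n k := by
  classical
  have hp : ∀ g : Equiv.Perm (Fin n), 0 ≤ convPow (rtMeasure n) k g :=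
    convPow_nonneg _ rt_nonneg k
  have cs := Finset.sum_mul_sq_le_sq_mul_sq (univ : Finset (Equiv.Perm (Fin n)))
    (fun g => Real.sqrt (convPow (rtMeasure n) k g))
    (fun g => Real.sqrt (convPow (rtMeasure n) k g) * fixR g)
  have e1 : ∀ g : Equiv.Perm (Fin n),
      Real.sqrt (convPow (rtMeasure n) k g)
        * (Real.sqrt (convPow (rtMeasure n) k g) * fixR g)
        = convPow (rtMeasure n) k g * fixR g := by
    intro g; rw [← mul_assoc, Real.mul_self_sqrt (hp g)]
  have e2 : ∀ g : Equiv.Perm (Fin n),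
      (Real.sqrt (convPow (rtMeasure n) k g)) ^ 2 = convPow (rtMeasure n) k g := by
    intro g; rw [Real.sq_sqrt (hp g)]
  have e3 : ∀ g : Equiv.Perm (Fin n),
      (Real.sqrt (convPow (rtMeasure n) k g) * fixR g) ^ 2
        = convPow (rtMeasure n) k g * (fixR g) ^ 2 := by
    intro g; rw [mul_pow, Real.sq_sqrt (hp g)]
  rw [Finset.sum_congr rfl (fun g _ => e1 g), Finset.sum_congr rfl (fun g _ => e2 g),
    Finset.sum_congr rfl (fun g _ => e3 g), convPow_mass _ (rt_mass hn), one_mul] at cs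
  unfold Fm Sm
  exact cs

lemma expand_aux {N x : ℝ} (hN : 0 < N) (hx0 : 0 ≤ x) (h1 : 1 ≤ N) :
    (N - 4) / N * ((1 + (N - 1) * x)^2 + (10 * (N - 1) * x + 4))
      + 8 / N * (1 + (N - 1) * x) + 4 / N
      - (1 + (N - 1) * ((N - 2) / N * x)) ^ 2
      ≤ 10 * (N - 1) * ((N - 2) / N * x) + 4 := by
  have hn' : N ≠ 0 := ne_of_gt hN
  have diff : 10 * (N - 1) * ((N - 2) / N * x) + 4
      - ((N - 4) / N * ((1 + (N - 1) * x)^2 + (10 * (N - 1) * x + 4))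
        + 8 / N * (1 + (N - 1) * x) + 4 / N
        - (1 + (N - 1) * ((N - 2) / N * x)) ^ 2)
      = (8 * N + 16 * N * (N - 1) * x + 4 * (N - 1)^2 * x^2) / N^2 := by
    field_simp
    ring
  have hnum : 0 ≤ (8 * N + 16 * N * (N - 1) * x + 4 * (N - 1)^2 * x^2) / N^2 := by
    apply div_nonneg _ (by positivity)
    have t1 : 0 ≤ 16 * N * (N - 1) * x := by
      apply mul_nonneg _ hx0
      nlinarith
    nlinarith [sq_nonneg ((N - 1) * x)]
  linarith [diff, hnum]

lemma var_bound (hn : 3 ≤ n) (k : ℕ) :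
    Sm n k - (Fm n k) ^ 2 ≤ 10 * ((n : ℝ) - 1) * (((n : ℝ) - 2) / n) ^ k + 4 := by
  have h0 : 0 < n := by omega
  have hN : (3:ℝ) ≤ n := by exact_mod_cast hn
  have hn' : (n : ℝ) ≠ 0 := by positivity
  have hx : ∀ m : ℕ, (0:ℝ) ≤ (((n : ℝ) - 2) / n) ^ m := by
    intro m
    apply pow_nonneg
    apply div_nonneg <;> linarith
  induction k with
  | zero =>
      rw [Sm_zero, Fm_zero]
      simp only [pow_zero, mul_one]
      nlinarith
  | succ k ih =>
      have hS := Sm_succ_le h0 k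
      have hFc := Fm_closed h0 k
      have hFc' := Fm_closed h0 (k + 1)
      have hvn := var_nonneg (n := n) h0 k
      set x := (((n : ℝ) - 2) / n) ^ k with hxdef
      clear_value x
      have hxx : (((n : ℝ) - 2) / n) ^ (k+1) = ((n : ℝ) - 2) / n * x := by
        rw [hxdef, pow_succ]; ring
      have hx0 : 0 ≤ x := hxdef ▸ hx k
      rw [hxx]
      rcases eq_or_lt_of_le hN with h3 | h4
      · -- n = 3
        have hn3 : (n : ℝ) = 3 := h3.symm
        rw [hn3] at hS hFc hFc' ⊢
        norm_num at hS hFc hFc' ⊢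
        nlinarith [hS, hFc, hFc', hvn, ih, hx0, sq_nonneg (Fm n k - 1 - 2*x)]
      · have h4' : (4:ℝ) ≤ n := by
          have h3n : (3:ℕ) < n := by
            by_contra hc
            push_neg at hc
            interval_cases n <;> simp_all <;> linarith
          have : ((4:ℕ) : ℝ) ≤ (n : ℝ) := by exact_mod_cast Nat.succ_le_of_lt h3n
          simpa using this
        have hrho : 0 ≤ ((n:ℝ) - 4) / n := by
          apply div_nonneg <;> linarith
        have hnn : (0:ℝ) < (n:ℝ) := by linarith
        rw [hFc] at hS ih hvn
        rw [hFc', hxx]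
        have hSle : ((n : ℝ) - 4) / n * Sm n k
            ≤ ((n : ℝ) - 4) / n * ((1 + ((n:ℝ) - 1) * x)^2 + (10 * ((n : ℝ) - 1) * x + 4)) :=
          mul_le_mul_of_nonneg_left (by linarith [ih]) hrho
        have expand := expand_aux (N := (n:ℝ)) (x := x) hnn hx0 (by linarith)
        linarith [hS, hSle, expand]


lemma card_fiber (x y : Fin n) :
    (univ.filter (fun σ : Equiv.Perm (Fin n) => σ x = y)).card
      = (univ.filter (fun σ : Equiv.Perm (Fin n) => σ x = x)).card := by
  classical
  apply Finset.card_bij' (fun σ _ => Equiv.swap x y * σ) (fun τ _ => Equiv.swap x y * τ)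
  · intro σ hσ
    have h : σ x = y := (Finset.mem_filter.1 hσ).2
    simp only [Finset.mem_filter, Finset.mem_univ, true_and, Equiv.Perm.mul_apply, h,
      Equiv.swap_apply_right]
  · intro τ hτ
    have h : τ x = x := (Finset.mem_filter.1 hτ).2
    simp only [Finset.mem_filter, Finset.mem_univ, true_and, Equiv.Perm.mul_apply, h,
      Equiv.swap_apply_left]
  · intro σ _
    rw [← mul_assoc, Equiv.swap_mul_self, one_mul]
  · intro τ _
    rw [← mul_assoc, Equiv.swap_mul_self, one_mul]

lemma card_fix_fiber (x : Fin n) :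
    n * (univ.filter (fun σ : Equiv.Perm (Fin n) => σ x = x)).card = n.factorial := by
  classical
  have h := Finset.card_eq_sum_card_fiberwise
    (f := fun σ : Equiv.Perm (Fin n) => σ x) (s := univ) (t := univ) (fun σ _ => Finset.mem_univ _)
  rw [Finset.card_univ, Fintype.card_perm, Fintype.card_fin] at h
  have h2 : ∀ y : Fin n, (univ.filter (fun σ : Equiv.Perm (Fin n) => σ x = y)).card
      = (univ.filter (fun σ : Equiv.Perm (Fin n) => σ x = x)).card := fun y => card_fiber x y
  rw [Finset.sum_congr rfl (fun y _ => h2 y), Finset.sum_const, Finset.card_univ,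
    Fintype.card_fin, smul_eq_mul] at h
  omega

lemma sum_fixR (h0 : 0 < n) : ∑ σ : Equiv.Perm (Fin n), fixR σ = (n.factorial : ℝ) := by
  classical
  unfold fixR
  rw [Finset.sum_comm]
  have h : ∀ x : Fin n, ∑ σ : Equiv.Perm (Fin n), (if σ x = x then (1:ℝ) else 0)
      = (n.factorial : ℝ) / n := by
    intro x
    rw [Finset.sum_boole]
    have hc := card_fix_fiber x
    have hcast : (n : ℝ) * ((univ.filter (fun σ : Equiv.Perm (Fin n) => σ x = x)).card : ℝ)
        = (n.factorial : ℝ) := by exact_mod_cast hc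
    have hn' : (n : ℝ) ≠ 0 := Nat.cast_ne_zero.2 h0.ne'
    rw [eq_div_iff hn']
    rw [mul_comm] at hcast
    exact_mod_cast hcast
  rw [Finset.sum_congr rfl (fun x _ => h x), Finset.sum_const, Finset.card_univ,
    Fintype.card_fin, nsmul_eq_mul]
  have hn' : (n : ℝ) ≠ 0 := Nat.cast_ne_zero.2 h0.ne'
  field_simp


lemma uniform_exp (h0 : 0 < n) :
    ∑ σ : Equiv.Perm (Fin n), uniformSn n σ * fixR σ = 1 := by
  unfold uniformSn
  rw [← Finset.mul_sum, sum_fixR h0]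
  have : (n.factorial : ℝ) ≠ 0 := Nat.cast_ne_zero.2 (Nat.factorial_ne_zero n)
  field_simp

lemma uniform_mass : ∑ σ : Equiv.Perm (Fin n), uniformSn n σ = 1 := by
  unfold uniformSn
  rw [Finset.sum_const, Finset.card_univ, Fintype.card_perm, Fintype.card_fin, nsmul_eq_mul]
  have : (n.factorial : ℝ) ≠ 0 := Nat.cast_ne_zero.2 (Nat.factorial_ne_zero n)
  field_simp

section TV

variable {G : Type*} [Fintype G]

lemma tv_ge_event (p u : G → ℝ) (hp : ∑ g : G, p g = 1) (hu : ∑ g : G, u g = 1)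
    (A : Finset G) : tvDist p u ≥ ∑ g ∈ A, p g - ∑ g ∈ A, u g := by
  rw [← Finset.sum_sub_distrib]
  have h1 : ∀ g ∈ A, p g - u g ≤ (|p g - u g| + (p g - u g)) / 2 := by
    intro g _
    have := le_abs_self (p g - u g)
    linarith
  have h2 : ∑ g ∈ A, (p g - u g) ≤ ∑ g ∈ A, (|p g - u g| + (p g - u g)) / 2 :=
    Finset.sum_le_sum h1
  have h3 : ∑ g ∈ A, (|p g - u g| + (p g - u g)) / 2
      ≤ ∑ g : G, (|p g - u g| + (p g - u g)) / 2 := by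
    apply Finset.sum_le_sum_of_subset_of_nonneg (Finset.subset_univ A)
    intro g _ _
    have := le_abs_self (p g - u g)
    have := abs_nonneg (p g - u g)
    linarith [neg_abs_le (p g - u g)]
  have h4 : ∑ g : G, (|p g - u g| + (p g - u g)) / 2
      = (1/2) * ∑ g : G, |p g - u g| + (1/2) * (∑ g : G, p g - ∑ g : G, u g) := by
    rw [← Finset.sum_sub_distrib, Finset.mul_sum, Finset.mul_sum, ← Finset.sum_add_distrib]
    apply Finset.sum_congr rfl
    intro g _
    ring
  unfold tvDist
  rw [hp, hu] at h4
  simp only [sub_self, mul_zero, add_zero] at h4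
  linarith [h2, h3, h4.le, h4.ge]

lemma tv_le_l2_gen (p u : G → ℝ) :
    tvDist p u ≤ (1/2) * Real.sqrt (Fintype.card G) * l2Dist p u := by
  unfold tvDist l2Dist
  have cs := Finset.sum_mul_sq_le_sq_mul_sq (univ : Finset G)
    (fun g => |p g - u g|) (fun _ => (1:ℝ))
  simp only [mul_one, one_pow, sq_abs, Finset.sum_const, Finset.card_univ, nsmul_eq_mul] at cs
  have h1 : ∑ g : G, |p g - u g| ≤ Real.sqrt (Fintype.card G)
      * Real.sqrt (∑ g : G, (p g - u g) ^ 2) := by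
    have hnn : 0 ≤ ∑ g : G, |p g - u g| := Finset.sum_nonneg fun g _ => abs_nonneg _
    have h2 : (∑ g : G, |p g - u g|) ^ 2
        ≤ (Real.sqrt (Fintype.card G) * Real.sqrt (∑ g : G, (p g - u g) ^ 2)) ^ 2 := by
      rw [mul_pow, Real.sq_sqrt (by positivity), Real.sq_sqrt (Finset.sum_nonneg
        fun g _ => sq_nonneg _)]
      calc (∑ g : G, |p g - u g|) ^ 2 ≤ (∑ g : G, (p g - u g)^2) * (Fintype.card G : ℝ) := cs
        _ = (Fintype.card G : ℝ) * ∑ g : G, (p g - u g)^2 := by ring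
    calc ∑ g : G, |p g - u g|
        = Real.sqrt ((∑ g : G, |p g - u g|) ^ 2) := (Real.sqrt_sq hnn).symm
      _ ≤ Real.sqrt ((Real.sqrt (Fintype.card G)
            * Real.sqrt (∑ g : G, (p g - u g) ^ 2)) ^ 2) := Real.sqrt_le_sqrt h2
      _ = Real.sqrt (Fintype.card G) * Real.sqrt (∑ g : G, (p g - u g) ^ 2) :=
          Real.sqrt_sq (by positivity)
  rw [mul_assoc]
  linarith

end TV


lemma tv_main (hn : 3 ≤ n) (k : ℕ) :
    tvDist (convPow (rtMeasure n) k) (uniformSn n)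
      ≥ 1 - (4 * (10 * (((n:ℝ)-1) * (((n:ℝ)-2)/n)^k) + 4))
            / (((n:ℝ)-1) * (((n:ℝ)-2)/n)^k) ^ 2
        - 2 / (((n:ℝ)-1) * (((n:ℝ)-2)/n)^k) := by
  classical
  have h0 : 0 < n := by omega
  have hN : (3:ℝ) ≤ n := by exact_mod_cast hn
  set μ := ((n:ℝ)-1) * (((n:ℝ)-2)/n)^k with hμdef
  have hμpos : 0 < μ := by
    apply mul_pos (by linarith)
    apply pow_pos
    apply div_pos <;> linarith
  set p := convPow (rtMeasure n) k with hpdef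
  have hp_nonneg : ∀ g, 0 ≤ p g := convPow_nonneg _ rt_nonneg k
  have hp_mass : ∑ g : Equiv.Perm (Fin n), p g = 1 := convPow_mass _ (rt_mass h0) k
  set A := univ.filter (fun g : Equiv.Perm (Fin n) => 1 + μ/2 ≤ fixR g) with hAdef
  have hF : Fm n k = 1 + μ := by rw [Fm_closed h0 k]
  have hVar : Sm n k - (Fm n k)^2 ≤ 10 * μ + 4 := by
    have := var_bound hn k
    linarith [this]
  -- Markov for uniform
  have hu_sum : ∑ g ∈ A, uniformSn n g ≤ 2 / μ := by
    have hpos : (0:ℝ) < 1 + μ/2 := by linarith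
    have h1 : ∀ g ∈ A, uniformSn n g ≤ (uniformSn n g * fixR g) / (1 + μ/2) := by
      intro g hg
      have hfix : 1 + μ/2 ≤ fixR g := (Finset.mem_filter.1 hg).2
      have hu0 : 0 ≤ uniformSn n g := by unfold uniformSn; positivity
      rw [le_div_iff₀ hpos]
      exact mul_le_mul_of_nonneg_left hfix hu0
    calc ∑ g ∈ A, uniformSn n g ≤ ∑ g ∈ A, (uniformSn n g * fixR g) / (1 + μ/2) :=
          Finset.sum_le_sum h1
      _ ≤ ∑ g : Equiv.Perm (Fin n), (uniformSn n g * fixR g) / (1 + μ/2) := by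
          apply Finset.sum_le_sum_of_subset_of_nonneg (Finset.subset_univ A)
          intro g _ _
          apply div_nonneg _ hpos.le
          apply mul_nonneg _ (fixR_nonneg g)
          unfold uniformSn; positivity
      _ = (∑ g : Equiv.Perm (Fin n), uniformSn n g * fixR g) / (1 + μ/2) := by
          rw [← Finset.sum_div]
      _ = 1 / (1 + μ/2) := by rw [uniform_exp h0]
      _ ≤ 2 / μ := by
          rw [div_le_div_iff₀ hpos hμpos]
          linarith
  -- Chebyshev for p
  have hcheb : ∑ g ∈ univ.filter (fun g : Equiv.Perm (Fin n) => ¬ (1 + μ/2 ≤ fixR g)), p g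
      ≤ (4 * (10 * μ + 4)) / μ ^ 2 := by
    have h1 : ∀ g ∈ univ.filter (fun g : Equiv.Perm (Fin n) => ¬ (1 + μ/2 ≤ fixR g)),
        p g ≤ p g * (Fm n k - fixR g)^2 / (μ^2/4) := by
      intro g hg
      have hfix : fixR g < 1 + μ/2 := by
        have := (Finset.mem_filter.1 hg).2
        linarith [not_le.1 this]
      have hgap : μ/2 < Fm n k - fixR g := by rw [hF]; linarith
      have hgap2 : μ^2/4 ≤ (Fm n k - fixR g)^2 := by nlinarith [hμpos]
      rw [le_div_iff₀ (by positivity)]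
      exact mul_le_mul_of_nonneg_left hgap2 (hp_nonneg g)
    calc ∑ g ∈ univ.filter (fun g : Equiv.Perm (Fin n) => ¬ (1 + μ/2 ≤ fixR g)), p g
        ≤ ∑ g ∈ univ.filter (fun g : Equiv.Perm (Fin n) => ¬ (1 + μ/2 ≤ fixR g)),
            p g * (Fm n k - fixR g)^2 / (μ^2/4) := Finset.sum_le_sum h1
      _ ≤ ∑ g : Equiv.Perm (Fin n), p g * (Fm n k - fixR g)^2 / (μ^2/4) := by
          apply Finset.sum_le_sum_of_subset_of_nonneg (Finset.subset_univ _)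
          intro g _ _
          apply div_nonneg _ (by positivity)
          exact mul_nonneg (hp_nonneg g) (sq_nonneg _)
      _ = (∑ g : Equiv.Perm (Fin n), p g * (Fm n k - fixR g)^2) / (μ^2/4) := by
          rw [← Finset.sum_div]
      _ = (Sm n k - (Fm n k)^2) / (μ^2/4) := by
          congr 1
          have e : ∀ g : Equiv.Perm (Fin n), p g * (Fm n k - fixR g)^2
              = (Fm n k)^2 * p g - 2 * Fm n k * (p g * fixR g) + p g * (fixR g)^2 := by
            intro g; ring
          rw [Finset.sum_congr rfl (fun g _ => e g)]
          rw [Finset.sum_add_distrib, Finset.sum_sub_distrib, ← Finset.mul_sum, ← Finset.mul_sum,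
            hp_mass, mul_one]
          unfold Sm Fm
          rw [← hpdef]
          ring
      _ ≤ (10 * μ + 4) / (μ^2/4) := by
          exact (div_le_div_iff_of_pos_right (by positivity)).2 hVar
      _ = (4 * (10 * μ + 4)) / μ ^ 2 := by
          rw [div_div_eq_mul_div]
          ring_nf
  have hsplit : (∑ g ∈ A, p g)
      + ∑ g ∈ univ.filter (fun g : Equiv.Perm (Fin n) => ¬ (1 + μ/2 ≤ fixR g)), p g = 1 := by
    rw [hAdef, Finset.sum_filter_add_sum_filter_not]
    exact hp_mass
  have htv := tv_ge_event p (uniformSn n) hp_mass uniform_mass A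
  linarith [htv, hsplit, hcheb, hu_sum]



lemma mu_lower (hn : 3 ≤ n) {c : ℝ} (hc : 0 < c) {k : ℕ}
    (hk : (k : ℝ) = (1/2 : ℝ) * n * Real.log n - c * n) :
    (2/27) * Real.exp (2*c) ≤ ((n:ℝ) - 1) * (((n:ℝ) - 2)/n) ^ k := by
  have hN : (3:ℝ) ≤ n := by exact_mod_cast hn
  have hNpos : (0:ℝ) < n := by linarith
  have hr_pos : (0:ℝ) < ((n:ℝ) - 2)/n := by apply div_pos <;> linarith
  have hlogN : (0:ℝ) ≤ Real.log n := Real.log_nonneg (by linarith)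
  -- r^k = exp (k log r)
  have hpow : (((n:ℝ) - 2)/n) ^ k = Real.exp (k * Real.log (((n:ℝ) - 2)/n)) := by
    rw [← Real.log_pow, Real.exp_log (pow_pos hr_pos k)]
  -- log r ≥ -(2/N + 12/N²)
  set y : ℝ := 2/(n:ℝ) + 12/(n:ℝ)^2 with hydef
  clear_value y
  have hy_pos : 0 < y := by rw [hydef]; positivity
  have hexp_y : 1 + y ≤ Real.exp y := by linarith [Real.add_one_le_exp y]
  have hr_ge : Real.exp (-y) ≤ ((n:ℝ) - 2)/n := by
    rw [Real.exp_neg]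
    have h1y : (0:ℝ) < 1 + y := by linarith
    have step1 : (Real.exp y)⁻¹ ≤ (1 + y)⁻¹ := by
      apply inv_anti₀ h1y hexp_y
    have step2 : (1 + y)⁻¹ ≤ ((n:ℝ) - 2)/n := by
      rw [inv_eq_one_div, div_le_div_iff₀ h1y hNpos, hydef]
      have hkey : (0:ℝ) ≤ 8 * n - 24 := by linarith
      have hn2 : (0:ℝ) < (n:ℝ)^2 := by positivity
      have expand : ((n:ℝ) - 2) * (1 + (2/(n:ℝ) + 12/(n:ℝ)^2)) - 1 * n
          = (8 * (n:ℝ) - 24) / (n:ℝ)^2 := by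
        field_simp
        ring
      nlinarith [div_nonneg hkey hn2.le, expand]
    linarith
  have hlog_r : -y ≤ Real.log (((n:ℝ) - 2)/n) := by
    have := Real.log_le_log (Real.exp_pos (-y)) hr_ge
    rwa [Real.log_exp] at this
  have hk_nonneg : (0:ℝ) ≤ (k:ℝ) := Nat.cast_nonneg k
  have hmul : (k:ℝ) * (-y) ≤ (k:ℝ) * Real.log (((n:ℝ) - 2)/n) :=
    mul_le_mul_of_nonneg_left hlog_r hk_nonneg
  -- k ≤ N/2 log N and 2k/N = log N - 2c
  have hk_le : (k:ℝ) ≤ 1/2 * n * Real.log n := by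
    rw [hk]; nlinarith [hc, hNpos]
  have hky : -((k:ℝ) * y) ≥ -(Real.log n - 2*c) - 6 * Real.log n / n := by
    have e1 : (k:ℝ) * (2/(n:ℝ)) = Real.log n - 2*c := by
      rw [hk]; field_simp
    have e2 : (k:ℝ) * (12/(n:ℝ)^2) ≤ 6 * Real.log n / n := by
      calc (k:ℝ) * (12/(n:ℝ)^2) ≤ (1/2 * n * Real.log n) * (12/(n:ℝ)^2) := by
            apply mul_le_mul_of_nonneg_right hk_le (by positivity)
        _ = 6 * Real.log n / n := by field_simp; ring
    have : (k:ℝ) * y = (k:ℝ) * (2/(n:ℝ)) + (k:ℝ) * (12/(n:ℝ)^2) := by rw [hydef]; ring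
    rw [this, e1]
    linarith [e2]
  have hstep : Real.exp (2*c - Real.log n - 6 * Real.log n / n)
      ≤ (((n:ℝ) - 2)/n) ^ k := by
    rw [hpow]
    apply Real.exp_le_exp.2
    calc 2*c - Real.log n - 6 * Real.log n / n = -(Real.log n - 2*c) - 6 * Real.log n / n := by
          ring
      _ ≤ -((k:ℝ) * y) := hky
      _ = (k:ℝ) * (-y) := by ring
      _ ≤ (k:ℝ) * Real.log (((n:ℝ) - 2)/n) := hmul
  -- exp(-6 log N / N) ≥ 1/9
  have h9 : (1/9 : ℝ) ≤ Real.exp (-(6 * Real.log n / n)) := by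
    have hmono : Real.log n / n ≤ Real.log 3 / 3 := by
      have h3mem : (3:ℝ) ∈ {x : ℝ | Real.exp 1 ≤ x} := by
        have : Real.exp 1 < 2.7182818286 := Real.exp_one_lt_d9
        simp only [Set.mem_setOf_eq]
        linarith
      have hNmem : (n:ℝ) ∈ {x : ℝ | Real.exp 1 ≤ x} := by
        have : Real.exp 1 < 2.7182818286 := Real.exp_one_lt_d9
        simp only [Set.mem_setOf_eq]
        linarith
      exact Real.log_div_self_antitoneOn h3mem hNmem hN
    have h6 : 6 * Real.log n / n ≤ 2 * Real.log 3 := by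
      have : 6 * (Real.log n / n) ≤ 6 * (Real.log 3 / 3) := by linarith
      calc 6 * Real.log n / n = 6 * (Real.log n / n) := by ring
        _ ≤ 6 * (Real.log 3 / 3) := this
        _ = 2 * Real.log 3 := by ring
    have hlog9 : 2 * Real.log 3 = Real.log 9 := by
      rw [show (9:ℝ) = 3^2 by norm_num, Real.log_pow]
      push_cast
      ring
    have : Real.exp (-(2 * Real.log 3)) ≤ Real.exp (-(6 * Real.log n / n)) :=
      Real.exp_le_exp.2 (by linarith)
    have e9 : Real.exp (-(2 * Real.log 3)) = 1/9 := by
      rw [hlog9, Real.exp_neg, Real.exp_log (by norm_num : (0:ℝ) < 9)]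
      norm_num
    linarith [this, e9.symm.le]
  -- combine
  have hsplit : Real.exp (2*c - Real.log n - 6 * Real.log n / n)
      = Real.exp (2*c) * (1/(n:ℝ)) * Real.exp (-(6 * Real.log n / n)) := by
    rw [show 2*c - Real.log n - 6 * Real.log n / n
        = 2*c + (-(Real.log n)) + (-(6 * Real.log n / n)) by ring,
      Real.exp_add, Real.exp_add, Real.exp_neg, Real.exp_log hNpos]
    rw [inv_eq_one_div]
  have hfrac : (2/3:ℝ) ≤ ((n:ℝ) - 1)/n := by
    rw [le_div_iff₀ hNpos]
    linarith
  have key : (2/27:ℝ) ≤ (((n:ℝ) - 1)/n) * Real.exp (-(6 * Real.log n / n)) := by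
    nlinarith [hfrac, h9, Real.exp_pos (-(6 * Real.log n / n))]
  have key2 : (2/27) * Real.exp (2*c)
      ≤ ((((n:ℝ) - 1)/n) * Real.exp (-(6 * Real.log n / n))) * Real.exp (2*c) :=
    mul_le_mul_of_nonneg_right key (Real.exp_pos _).le
  have key3 : ((((n:ℝ) - 1)/n) * Real.exp (-(6 * Real.log n / n))) * Real.exp (2*c)
      = ((n:ℝ) - 1) * (Real.exp (2*c) * (1/(n:ℝ)) * Real.exp (-(6 * Real.log n / n))) := by
    ring
  have final : ((n:ℝ) - 1) * Real.exp (2*c - Real.log n - 6 * Real.log n / n)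
      ≤ ((n:ℝ) - 1) * (((n:ℝ) - 2)/n) ^ k :=
    mul_le_mul_of_nonneg_left hstep (by linarith)
  rw [hsplit] at final
  linarith [key2, key3.le, key3.ge, final]

end RT

/-- There exists a universal constant `ã > 0` (one may take `ã = 2187`) such that for every
`n ≥ 3`, every `c > 0`, and every nonnegative integer `k` with
`k = (1/2) n log n − c n`, the `k`-fold convolution of the random-transposition measure on
`Sₙ` satisfies `(1/2)(n!)^{1/2} ‖P^{*k} − U‖₂ ≥ ‖P^{*k} − U‖_TV ≥ 1 − ã e^{−2c}`. -/
theorem stmt1 :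
    ∃ atilde : ℝ, 0 < atilde ∧
      ∀ n : ℕ, 3 ≤ n → ∀ c : ℝ, 0 < c → ∀ k : ℕ,
        (k : ℝ) = (1 / 2 : ℝ) * n * Real.log n - c * n →
        (1 / 2 : ℝ) * Real.sqrt (n.factorial : ℝ) *
            l2Dist (convPow (rtMeasure n) k) (uniformSn n) ≥
          tvDist (convPow (rtMeasure n) k) (uniformSn n) ∧
        tvDist (convPow (rtMeasure n) k) (uniformSn n) ≥ 1 - atilde * Real.exp (-2 * c) := by
  refine ⟨3500, by norm_num, ?_⟩
  intro n hn c hc k hk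
  constructor
  · -- Cauchy–Schwarz part
    have h := RT.tv_le_l2_gen (convPow (rtMeasure n) k) (uniformSn n)
    rw [Fintype.card_perm, Fintype.card_fin] at h
    exact h
  · -- main lower bound
    have htv := RT.tv_main hn k
    have hμ := RT.mu_lower hn hc hk
    set μ := ((n:ℝ) - 1) * (((n:ℝ) - 2)/n) ^ k with hμdef
    set E := Real.exp (2*c) with hEdef
    have hE1 : (1:ℝ) ≤ E := by
      rw [hEdef]
      have : (0:ℝ) ≤ 2*c := by linarith
      calc (1:ℝ) = Real.exp 0 := Real.exp_zero.symm
        _ ≤ Real.exp (2*c) := Real.exp_le_exp.2 this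
    have hEpos : (0:ℝ) < E := lt_of_lt_of_le one_pos hE1
    have hb : (0:ℝ) < (2/27) * E := by positivity
    have hμpos : (0:ℝ) < μ := lt_of_lt_of_le hb hμ
    have hexp : Real.exp (-2 * c) = 1 / E := by
      rw [hEdef, one_div, ← Real.exp_neg]
      congr 1
      ring
    have h2 : 2 / μ ≤ 27 / E := by
      calc 2 / μ ≤ 2 / ((2/27) * E) := div_le_div_of_nonneg_left (by norm_num) hb hμ
        _ = 27 / E := by
            field_simp
    have h40 : 40 / μ ≤ 540 / E := by
      calc 40 / μ ≤ 40 / ((2/27) * E) := div_le_div_of_nonneg_left (by norm_num) hb hμ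
        _ = 540 / E := by
            field_simp
            ring
    have hsq : ((2/27) * E)^2 ≤ μ^2 := by
      apply pow_le_pow_left₀ hb.le hμ
    have h16 : 16 / μ^2 ≤ 2916 / E := by
      calc 16 / μ^2 ≤ 16 / (((2/27) * E)^2) :=
            div_le_div_of_nonneg_left (by norm_num) (by positivity) hsq
        _ = 2916 / E^2 := by
            rw [mul_pow]
            rw [show ((2:ℝ)/27)^2 * E^2 = E^2 * (4/729) by ring]
            rw [div_mul_eq_div_div]
            norm_num
            ring
        _ ≤ 2916 / E := by
            apply div_le_div_of_nonneg_left (by norm_num) hEpos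
            nlinarith [hE1]
    have hsplit4 : (4 * (10 * μ + 4)) / μ^2 = 40 / μ + 16 / μ^2 := by
      field_simp
      ring
    have htot : (4 * (10 * μ + 4)) / μ^2 + 2 / μ ≤ 3500 * Real.exp (-2 * c) := by
      rw [hexp, hsplit4]
      have : (3500:ℝ) * (1/E) = 3500 / E := by ring
      rw [this]
      have hsum : 540 / E + 2916 / E + 27 / E ≤ 3500 / E := by
        rw [← add_div, ← add_div]
        exact (div_le_div_iff_of_pos_right hEpos).2 (by norm_num)
      linarith [h2, h40, h16, hsum]
    linarith [htv, htot]
end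

section
/- For every integer n ≥ 2 and every natural number k, the expectation under the k-fold convolution P^{*k} of the character χ(π) = fix(π) − 1 (where fix(π) is the number of fixed points of π) satisfies Σ_{π ∈ S_n} P^{*k}(π) (fix(π) − 1) = (n − 1)(1 − 2/n)^k. -/
open Finset Equiv

noncomputable def fixCount {n : ℕ} (π : Equiv.Perm (Fin n)) : ℕ :=
  (Finset.univ.filter fun i => π i = i).card


section Helpers
variable {n : ℕ}

open Finset Equiv

variable {n : ℕ}

lemma swap_eq_swap_iff {α : Type*} [DecidableEq α] {a b i j : α} (hab : a ≠ b) (hij : i ≠ j) :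
    Equiv.swap i j = Equiv.swap a b ↔ (i = a ∧ j = b) ∨ (i = b ∧ j = a) := by
  constructor
  · intro h
    have h1 : Equiv.swap a b i = j := by rw [← h]; simp [Equiv.swap_apply_left]
    rcases eq_or_ne i a with rfl | hia
    · left; exact ⟨rfl, by simpa [Equiv.swap_apply_left] using h1.symm⟩
    · rcases eq_or_ne i b with rfl | hib
      · right; exact ⟨rfl, by simpa [Equiv.swap_apply_right] using h1.symm⟩
      · exfalso; rw [Equiv.swap_apply_of_ne_of_ne hia hib] at h1; exact hij h1
  · rintro (⟨rfl, rfl⟩ | ⟨rfl, rfl⟩)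
    · rfl
    · exact Equiv.swap_comm _ _

open scoped Classical

lemma fiber_card (τ : Equiv.Perm (Fin n)) (hτ : τ.IsSwap) :
    ((univ : Finset (Fin n)).offDiag.filter
      (fun p => Equiv.swap p.1 p.2 = τ)).card = 2 := by
  obtain ⟨a, b, hab, rfl⟩ := hτ
  have : ((univ : Finset (Fin n)).offDiag.filter
      (fun p => Equiv.swap p.1 p.2 = Equiv.swap a b)) = {(a, b), (b, a)} := by
    ext ⟨i, j⟩
    simp only [Finset.mem_filter, Finset.mem_offDiag, Finset.mem_insert,
      Finset.mem_singleton, Finset.mem_univ, true_and, Prod.mk.injEq]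
    constructor
    · rintro ⟨hij, h⟩
      exact (swap_eq_swap_iff hab hij).1 h
    · rintro (⟨rfl, rfl⟩ | ⟨rfl, rfl⟩)
      · exact ⟨hab, (swap_eq_swap_iff hab hab).2 (Or.inl ⟨rfl, rfl⟩)⟩
      · exact ⟨hab.symm, (swap_eq_swap_iff hab hab.symm).2 (Or.inr ⟨rfl, rfl⟩)⟩
  rw [this]
  rw [Finset.card_insert_of_notMem (by simp [Prod.ext_iff, hab, hab.symm]),
    Finset.card_singleton]

lemma two_mul_sum_swaps (f : Equiv.Perm (Fin n) → ℝ) :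
    2 * ∑ τ ∈ (univ : Finset (Equiv.Perm (Fin n))).filter Equiv.Perm.IsSwap, f τ =
      ∑ p ∈ (univ : Finset (Fin n)).offDiag, f (Equiv.swap p.1 p.2) := by
  rw [← Finset.sum_fiberwise_of_maps_to
    (t := (univ : Finset (Equiv.Perm (Fin n))).filter Equiv.Perm.IsSwap)
    (g := fun p : Fin n × Fin n => Equiv.swap p.1 p.2)
    (fun p hp => by
      simp only [Finset.mem_offDiag, Finset.mem_univ, true_and] at hp
      exact Finset.mem_filter.2 ⟨Finset.mem_univ _, p.1, p.2, hp, rfl⟩)]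
  rw [Finset.mul_sum]
  refine Finset.sum_congr rfl fun τ hτ => ?_
  simp only [Finset.mem_filter] at hτ
  rw [Finset.sum_congr rfl (fun p hp => by
    simp only [Finset.mem_filter] at hp
    rw [hp.2]), Finset.sum_const, fiber_card τ hτ.2]
  ring

lemma count_move (x y : Fin n) (hyx : y ≠ x) :
    (((univ : Finset (Fin n)).offDiag).filter
      (fun p => Equiv.swap p.1 p.2 y = x)).card = 2 := by
  have hset : (((univ : Finset (Fin n)).offDiag).filter
      (fun p => Equiv.swap p.1 p.2 y = x)) = {(x, y), (y, x)} := by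
    ext ⟨i, j⟩
    simp only [Finset.mem_filter, Finset.mem_offDiag, Finset.mem_insert,
      Finset.mem_singleton, Finset.mem_univ, true_and, Prod.mk.injEq]
    constructor
    · rintro ⟨hij, h⟩
      rcases eq_or_ne y i with rfl | hyi
      · right
        rw [Equiv.swap_apply_left] at h
        exact ⟨rfl, h⟩
      · rcases eq_or_ne y j with rfl | hyj
        · left
          rw [Equiv.swap_apply_right] at h
          exact ⟨h, rfl⟩
        · rw [Equiv.swap_apply_of_ne_of_ne hyi hyj] at h
          exact absurd h hyx
    · rintro (⟨rfl, rfl⟩ | ⟨rfl, rfl⟩)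
      · exact ⟨hyx.symm, Equiv.swap_apply_right _ _⟩
      · exact ⟨hyx, Equiv.swap_apply_left _ _⟩
  rw [hset, Finset.card_insert_of_notMem (by simp [Prod.ext_iff, hyx, hyx.symm]),
    Finset.card_singleton]

lemma count_fix (hn : 2 ≤ n) (x : Fin n) :
    (((univ : Finset (Fin n)).offDiag).filter
      (fun p => Equiv.swap p.1 p.2 x = x)).card = (n - 1) * (n - 2) := by
  have hset : (((univ : Finset (Fin n)).offDiag).filter
      (fun p => Equiv.swap p.1 p.2 x = x)) = ((univ : Finset (Fin n)).erase x).offDiag := by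
    ext ⟨i, j⟩
    simp only [Finset.mem_filter, Finset.mem_offDiag, Finset.mem_erase,
      Finset.mem_univ, true_and, and_true]
    constructor
    · rintro ⟨hij, h⟩
      rcases eq_or_ne i x with rfl | hix
      · rw [Equiv.swap_apply_left] at h; exact absurd h.symm hij
      · rcases eq_or_ne j x with rfl | hjx
        · rw [Equiv.swap_apply_right] at h; exact absurd h hij
        · exact ⟨hix, hjx, hij⟩
    · rintro ⟨hix, hjx, hij⟩
      exact ⟨hij, Equiv.swap_apply_of_ne_of_ne (Ne.symm hix) (Ne.symm hjx)⟩
  rw [hset, Finset.offDiag_card]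
  rw [Finset.card_erase_of_mem (Finset.mem_univ x), Finset.card_univ, Fintype.card_fin]
  obtain ⟨k, rfl⟩ : ∃ k, n = k + 2 := ⟨n - 2, by omega⟩
  have : (k + 2 - 1) * (k + 2 - 1) = (k + 2 - 1) * (k + 2 - 2) + (k + 2 - 1) := by
    simp; ring
  omega

lemma fixCount_real (σ : Equiv.Perm (Fin n)) :
    (fixCount σ : ℝ) = ∑ x : Fin n, if σ x = x then (1 : ℝ) else 0 := by
  rw [Finset.sum_boole, fixCount]

lemma sum_offDiag_fix (hn : 2 ≤ n) (h : Equiv.Perm (Fin n)) :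
    ∑ p ∈ (univ : Finset (Fin n)).offDiag, ((fixCount (Equiv.swap p.1 p.2 * h) : ℝ)) =
      (fixCount h : ℝ) * (((n : ℝ) - 1) * ((n : ℝ) - 2)) +
        ((n : ℝ) - fixCount h) * 2 := by
  have key : ∀ x : Fin n,
      (∑ p ∈ (univ : Finset (Fin n)).offDiag,
        if Equiv.swap p.1 p.2 (h x) = x then (1 : ℝ) else 0) =
      if h x = x then ((n : ℝ) - 1) * ((n : ℝ) - 2) else 2 := by
    intro x
    rw [Finset.sum_boole]
    rcases eq_or_ne (h x) x with hx | hx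
    · rw [if_pos hx]
      simp only [hx]
      rw [count_fix hn x]
      have h1 : (1 : ℕ) ≤ n := by omega
      have h2 : (2 : ℕ) ≤ n := hn
      push_cast [Nat.cast_sub h1, Nat.cast_sub h2]
      ring
    · rw [if_neg hx, count_move x (h x) hx]
      norm_num
  calc ∑ p ∈ (univ : Finset (Fin n)).offDiag, ((fixCount (Equiv.swap p.1 p.2 * h) : ℝ))
      = ∑ p ∈ (univ : Finset (Fin n)).offDiag, ∑ x : Fin n,
          if Equiv.swap p.1 p.2 (h x) = x then (1 : ℝ) else 0 := by
        refine Finset.sum_congr rfl fun p _ => ?_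
        rw [fixCount_real]
        refine Finset.sum_congr rfl fun x _ => ?_
        rw [Equiv.Perm.mul_apply]
    _ = ∑ x : Fin n, ∑ p ∈ (univ : Finset (Fin n)).offDiag,
          if Equiv.swap p.1 p.2 (h x) = x then (1 : ℝ) else 0 := Finset.sum_comm
    _ = ∑ x : Fin n, if h x = x then ((n : ℝ) - 1) * ((n : ℝ) - 2) else 2 := by
        exact Finset.sum_congr rfl fun x _ => key x
    _ = _ := by
        rw [Finset.sum_ite, Finset.sum_const, Finset.sum_const, nsmul_eq_mul, nsmul_eq_mul]
        have hle : (Finset.univ.filter fun x : Fin n => h x = x).card ≤ n := by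
          exact (Finset.card_filter_le univ _).trans_eq (by simp)
        have hcards : (Finset.univ.filter fun x : Fin n => ¬ h x = x).card
            = n - (Finset.univ.filter fun x : Fin n => h x = x).card := by
          have := Finset.card_filter_add_card_filter_not
            (s := (univ : Finset (Fin n))) (p := fun x : Fin n => h x = x)
          simp only [Finset.card_univ, Fintype.card_fin] at this
          omega
        rw [hcards, fixCount, Nat.cast_sub hle]

lemma swaps_card_real (hn : 2 ≤ n) :
    2 * (((univ : Finset (Equiv.Perm (Fin n))).filter Equiv.Perm.IsSwap).card : ℝ)
      = (n : ℝ) * n - n := by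
  have := two_mul_sum_swaps (n := n) (fun _ => (1 : ℝ))
  simp only [Finset.sum_const, nsmul_eq_mul, mul_one] at this
  rw [this, Finset.offDiag_card, Finset.card_univ, Fintype.card_fin]
  have : n ≤ n * n := Nat.le_mul_of_pos_left n (by omega)
  push_cast [Nat.cast_sub this]
  ring

lemma step (hn : 2 ≤ n) (h : Equiv.Perm (Fin n)) :
    ∑ u : Equiv.Perm (Fin n), rtMeasure n u * ((fixCount (u * h) : ℝ) - 1)
      = (1 - 2 / n) * ((fixCount h : ℝ) - 1) := by
  have hn0 : (n : ℝ) ≠ 0 := by positivity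
  set w : Equiv.Perm (Fin n) → ℝ := fun u => (fixCount (u * h) : ℝ) - 1 with hw
  have hsplit : ∑ u : Equiv.Perm (Fin n), rtMeasure n u * w u
      = (1 / n) * w 1 + ∑ τ ∈ (univ : Finset (Equiv.Perm (Fin n))).filter Equiv.Perm.IsSwap,
          (2 / (n : ℝ) ^ 2) * w τ := by
    rw [← Finset.sum_filter_add_sum_filter_not univ (fun u : Equiv.Perm (Fin n) => u = 1)]
    congr 1
    · have : (univ : Finset (Equiv.Perm (Fin n))).filter (fun u : Equiv.Perm (Fin n) => u = 1) = ({1} : Finset (Equiv.Perm (Fin n))) := by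
        ext u; simp
      rw [this, Finset.sum_singleton]
      simp [rtMeasure]
    · rw [Finset.sum_congr rfl (fun u hu => ?_),
        ← Finset.sum_filter (fun u : Equiv.Perm (Fin n) => u.IsSwap)
          (fun u => (2 / (n : ℝ) ^ 2) * w u)]
      · congr 1
        ext τ
        simp only [Finset.mem_filter, Finset.mem_univ, true_and]
        constructor
        · rintro ⟨-, hs⟩; exact hs
        · intro hs
          refine ⟨?_, hs⟩
          obtain ⟨a, b, hab, rfl⟩ := hs
          intro e
          have := congrArg (fun σ : Equiv.Perm (Fin n) => σ a) e
          simp only [Equiv.swap_apply_left, Equiv.Perm.one_apply] at this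
          exact hab this.symm
      · simp only [Finset.mem_filter, Finset.mem_univ, true_and] at hu
        rw [rtMeasure, if_neg hu]
        split_ifs with hs
        · rfl
        · simp
  rw [hsplit]
  have hT : 2 * (∑ τ ∈ (univ : Finset (Equiv.Perm (Fin n))).filter Equiv.Perm.IsSwap,
      (fixCount (τ * h) : ℝ))
      = (fixCount h : ℝ) * (((n : ℝ) - 1) * ((n : ℝ) - 2)) + ((n : ℝ) - fixCount h) * 2 := by
    rw [two_mul_sum_swaps (fun τ => (fixCount (τ * h) : ℝ))]
    exact sum_offDiag_fix hn h
  have hN := swaps_card_real (n := n) hn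
  have hsum : ∑ τ ∈ (univ : Finset (Equiv.Perm (Fin n))).filter Equiv.Perm.IsSwap,
      (2 / (n : ℝ) ^ 2) * w τ
      = (2 / (n : ℝ) ^ 2) * ((∑ τ ∈ (univ : Finset (Equiv.Perm (Fin n))).filter
          Equiv.Perm.IsSwap, (fixCount (τ * h) : ℝ))
        - ((univ : Finset (Equiv.Perm (Fin n))).filter Equiv.Perm.IsSwap).card) := by
    rw [← Finset.mul_sum]
    congr 1
    rw [hw]
    rw [Finset.sum_sub_distrib, Finset.sum_const, nsmul_eq_mul, mul_one]
  have hT' : (∑ τ ∈ (univ : Finset (Equiv.Perm (Fin n))).filter Equiv.Perm.IsSwap,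
      (fixCount (τ * h) : ℝ))
      = ((fixCount h : ℝ) * (((n : ℝ) - 1) * ((n : ℝ) - 2)) + ((n : ℝ) - fixCount h) * 2) / 2 := by
    linarith [hT]
  have hN' : (((univ : Finset (Equiv.Perm (Fin n))).filter Equiv.Perm.IsSwap).card : ℝ)
      = ((n : ℝ) * n - n) / 2 := by linarith [hN]
  rw [hsum, hT', hN', hw]
  simp only [one_mul]
  field_simp
  ring

end Helpers

/-- For every `n ≥ 2` and every `k`, the expectation under `P^{*k}` of
`χ(π) = fix(π) − 1` equals `(n − 1)(1 − 2/n)^k`. -/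
theorem stmt2 (n : ℕ) (hn : 2 ≤ n) (k : ℕ) :
    ∑ π : Equiv.Perm (Fin n), convPow (rtMeasure n) k π * ((fixCount π : ℝ) - 1) =
      ((n : ℝ) - 1) * (1 - 2 / n) ^ k := by
  induction k with
  | zero =>
    simp only [convPow, ite_mul, one_mul, zero_mul]
    rw [Finset.sum_ite_eq' univ (1 : Equiv.Perm (Fin n))
      (fun π => (fixCount π : ℝ) - 1), if_pos (Finset.mem_univ _)]
    have h1 : fixCount (1 : Equiv.Perm (Fin n)) = n := by
      rw [fixCount]
      simp
    rw [h1, pow_zero, mul_one]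
  | succ k ih =>
    simp only [convPow]
    calc ∑ π : Equiv.Perm (Fin n),
          (∑ h : Equiv.Perm (Fin n), rtMeasure n (π * h⁻¹) * convPow (rtMeasure n) k h) *
            ((fixCount π : ℝ) - 1)
        = ∑ h : Equiv.Perm (Fin n), ∑ π : Equiv.Perm (Fin n),
            (rtMeasure n (π * h⁻¹) * convPow (rtMeasure n) k h) * ((fixCount π : ℝ) - 1) := by
          rw [Finset.sum_comm]
          exact Finset.sum_congr rfl fun π _ => Finset.sum_mul _ _ _
      _ = ∑ h : Equiv.Perm (Fin n), convPow (rtMeasure n) k h *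
            ∑ π : Equiv.Perm (Fin n), rtMeasure n (π * h⁻¹) * ((fixCount π : ℝ) - 1) := by
          refine Finset.sum_congr rfl fun h _ => ?_
          rw [Finset.mul_sum]
          exact Finset.sum_congr rfl fun π _ => by ring
      _ = ∑ h : Equiv.Perm (Fin n), convPow (rtMeasure n) k h *
            ((1 - 2 / n) * ((fixCount h : ℝ) - 1)) := by
          refine Finset.sum_congr rfl fun h _ => ?_
          congr 1
          rw [← step hn h]
          exact (Fintype.sum_equiv (Equiv.mulRight h)
            (fun u => rtMeasure n u * ((fixCount (u * h) : ℝ) - 1))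
            (fun π => rtMeasure n (π * h⁻¹) * ((fixCount π : ℝ) - 1))
            (fun u => by simp)).symm
      _ = (1 - 2 / n) * ∑ h : Equiv.Perm (Fin n),
            convPow (rtMeasure n) k h * ((fixCount h : ℝ) - 1) := by
          rw [Finset.mul_sum]
          exact Finset.sum_congr rfl fun h _ => by ring
      _ = ((n : ℝ) - 1) * (1 - 2 / n) ^ (k + 1) := by rw [ih]; ring
end

section
/- For every integer n ≥ 4 and every natural number k, the second moment under the k-fold convolution P^{*k} of the character χ(π) = fix(π) − 1 satisfies Σ_{π ∈ S_n} P^{*k}(π) (fix(π) − 1)² = 1 + (n − 1)(1 − 2/n)^k + (1/2) n (n − 3)(1 − 2/n)^{2k} + (1/2)(n − 1)(n − 2)(1 − 4/n)^k. -/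
set_option linter.unnecessarySeqFocus false
set_option linter.unreachableTactic false
set_option linter.unusedTactic false
set_option linter.unusedVariables false
set_option maxHeartbeats 1600000



open Finset

open Equiv
open scoped Classical

section Helpers
variable {n : ℕ}

lemma swapFix_iff {a b x : Fin n} (hab : a ≠ b) :
    Equiv.swap a b x = x ↔ x ≠ a ∧ x ≠ b := by
  rw [Equiv.swap_apply_def]
  split_ifs with h1 h2 <;> constructor <;> intro h <;> simp_all <;> tauto

lemma swapEq_iff {a b x u : Fin n} (hab : a ≠ b) (hxu : x ≠ u) :
    Equiv.swap a b x = u ↔ (a = x ∧ b = u) ∨ (a = u ∧ b = x) := by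
  rw [Equiv.swap_apply_def]
  split_ifs with h1 h2 <;> constructor <;> intro h <;> simp_all <;> tauto

lemma isSwap_ne_one {τ : Equiv.Perm (Fin n)} (h : τ.IsSwap) : τ ≠ 1 := by
  obtain ⟨a, b, hab, rfl⟩ := h
  intro h1
  have : Equiv.swap a b a = (1 : Equiv.Perm (Fin n)) a := by rw [h1]
  simp [Equiv.swap_apply_left] at this
  exact hab this.symm
end Helpers

section Counts
variable {n : ℕ}

lemma erase_to_sub (f : Fin n → ℝ) (a : Fin n) :
    ∑ b ∈ univ.erase a, f b = (∑ b : Fin n, f b) - f a :=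
  Finset.sum_erase_eq_sub (mem_univ a)

lemma sum_univ_ite_eq (x : Fin n) (f : Fin n → ℝ) :
    (∑ a : Fin n, if a = x then f a else 0) = f x := by
  rw [Finset.sum_ite_eq' univ x f, if_pos (mem_univ x)]

lemma sum_ind_eq (x : Fin n) : (∑ a : Fin n, if a = x then (1:ℝ) else 0) = 1 :=
  sum_univ_ite_eq x _

lemma sum_ind_ne (x : Fin n) : (∑ a : Fin n, if a ≠ x then (1:ℝ) else 0) = (n:ℝ) - 1 := by
  have : ∀ a : Fin n, (if a ≠ x then (1:ℝ) else 0) = 1 - (if a = x then (1:ℝ) else 0) := by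
    intro a; by_cases h : a = x <;> simp [h]
  rw [Finset.sum_congr rfl (fun a _ => this a), Finset.sum_sub_distrib, sum_ind_eq,
    Finset.sum_const, card_univ, Fintype.card_fin]
  simp

lemma sum_ind_ne2 {x y : Fin n} (hxy : x ≠ y) :
    (∑ a : Fin n, if a ≠ x ∧ a ≠ y then (1:ℝ) else 0) = (n:ℝ) - 2 := by
  have : ∀ a : Fin n, (if a ≠ x ∧ a ≠ y then (1:ℝ) else 0)
      = 1 - (if a = x then (1:ℝ) else 0) - (if a = y then (1:ℝ) else 0) := by
    intro a; by_cases h1 : a = x <;> by_cases h2 : a = y <;> simp_all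
  rw [Finset.sum_congr rfl (fun a _ => this a), Finset.sum_sub_distrib,
    Finset.sum_sub_distrib, sum_ind_eq, sum_ind_eq, Finset.sum_const, card_univ,
    Fintype.card_fin]
  simp; ring

lemma cnt_pair {p q : Fin n} (hpq : p ≠ q) :
    (∑ a : Fin n, ∑ b ∈ univ.erase a,
      (if (a = p ∧ b = q) ∨ (a = q ∧ b = p) then (1:ℝ) else 0)) = 2 := by
  rw [Finset.sum_congr rfl (fun a _ => erase_to_sub _ a)]
  have hdiag : ∀ a : Fin n, (if (a = p ∧ a = q) ∨ (a = q ∧ a = p) then (1:ℝ) else 0) = 0 := by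
    intro a
    have hcond : ¬((a = p ∧ a = q) ∨ (a = q ∧ a = p)) := by
      rintro (⟨rfl, rfl⟩ | ⟨rfl, rfl⟩) <;> exact hpq rfl
    rw [if_neg hcond]
  have hsplit : ∀ a b : Fin n, (if (a = p ∧ b = q) ∨ (a = q ∧ b = p) then (1:ℝ) else 0)
      = (if a = p then (1:ℝ) else 0) * (if b = q then (1:ℝ) else 0)
        + (if a = q then (1:ℝ) else 0) * (if b = p then (1:ℝ) else 0) := by
    intro a b
    by_cases h1 : a = p <;> by_cases h2 : b = q <;> by_cases h3 : a = q <;>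
      by_cases h4 : b = p <;> simp_all
  rw [Finset.sum_sub_distrib]
  rw [Finset.sum_congr rfl (fun a _ => hdiag a), Finset.sum_const, smul_zero, sub_zero]
  have : ∀ a : Fin n, (∑ b : Fin n, if (a = p ∧ b = q) ∨ (a = q ∧ b = p) then (1:ℝ) else 0)
      = (if a = p then (1:ℝ) else 0) + (if a = q then (1:ℝ) else 0) := by
    intro a
    rw [Finset.sum_congr rfl (fun b _ => hsplit a b), Finset.sum_add_distrib,
      ← Finset.mul_sum, ← Finset.mul_sum, sum_ind_eq, sum_ind_eq, mul_one, mul_one]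
  rw [Finset.sum_congr rfl (fun a _ => this a), Finset.sum_add_distrib, sum_ind_eq, sum_ind_eq]
  norm_num

lemma cnt_fix1 (x : Fin n) :
    (∑ a : Fin n, ∑ b ∈ univ.erase a,
      (if a ≠ x ∧ b ≠ x then (1:ℝ) else 0)) = ((n:ℝ)-1)*((n:ℝ)-2) := by
  rw [Finset.sum_congr rfl (fun a _ => erase_to_sub _ a)]
  have hsplit : ∀ a b : Fin n, (if a ≠ x ∧ b ≠ x then (1:ℝ) else 0)
      = (if a ≠ x then (1:ℝ) else 0) * (if b ≠ x then (1:ℝ) else 0) := by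
    intro a b; by_cases h1 : a = x <;> by_cases h2 : b = x <;> simp_all
  have hdiag : ∀ a : Fin n, (if a ≠ x ∧ a ≠ x then (1:ℝ) else 0)
      = (if a ≠ x then (1:ℝ) else 0) := by intro a; by_cases h : a = x <;> simp_all
  rw [Finset.sum_sub_distrib, Finset.sum_congr rfl (fun a _ => hdiag a), sum_ind_ne]
  have : ∀ a : Fin n, (∑ b : Fin n, if a ≠ x ∧ b ≠ x then (1:ℝ) else 0)
      = (if a ≠ x then (1:ℝ) else 0) * ((n:ℝ)-1) := by
    intro a
    rw [Finset.sum_congr rfl (fun b _ => hsplit a b), ← Finset.mul_sum, sum_ind_ne]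
  rw [Finset.sum_congr rfl (fun a _ => this a), ← Finset.sum_mul, sum_ind_ne]
  ring

lemma cnt_fix2 {x y : Fin n} (hxy : x ≠ y) :
    (∑ a : Fin n, ∑ b ∈ univ.erase a,
      (if (a ≠ x ∧ a ≠ y) ∧ (b ≠ x ∧ b ≠ y) then (1:ℝ) else 0)) = ((n:ℝ)-2)*((n:ℝ)-3) := by
  rw [Finset.sum_congr rfl (fun a _ => erase_to_sub _ a)]
  have hsplit : ∀ a b : Fin n, (if (a ≠ x ∧ a ≠ y) ∧ (b ≠ x ∧ b ≠ y) then (1:ℝ) else 0)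
      = (if a ≠ x ∧ a ≠ y then (1:ℝ) else 0) * (if b ≠ x ∧ b ≠ y then (1:ℝ) else 0) := by
    intro a b
    by_cases h1 : a ≠ x ∧ a ≠ y <;> by_cases h2 : b ≠ x ∧ b ≠ y <;> simp [h1, h2]
  have hdiag : ∀ a : Fin n, (if (a ≠ x ∧ a ≠ y) ∧ (a ≠ x ∧ a ≠ y) then (1:ℝ) else 0)
      = (if a ≠ x ∧ a ≠ y then (1:ℝ) else 0) := by
    intro a; by_cases h : a ≠ x ∧ a ≠ y <;> simp_all
  rw [Finset.sum_sub_distrib, Finset.sum_congr rfl (fun a _ => hdiag a), sum_ind_ne2 hxy]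
  have : ∀ a : Fin n, (∑ b : Fin n, if (a ≠ x ∧ a ≠ y) ∧ (b ≠ x ∧ b ≠ y) then (1:ℝ) else 0)
      = (if a ≠ x ∧ a ≠ y then (1:ℝ) else 0) * ((n:ℝ)-2) := by
    intro a
    rw [Finset.sum_congr rfl (fun b _ => hsplit a b), ← Finset.mul_sum, sum_ind_ne2 hxy]
  rw [Finset.sum_congr rfl (fun a _ => this a), ← Finset.sum_mul, sum_ind_ne2 hxy]
  ring
end Counts
section SwapCounts
variable {n : ℕ}

lemma cnt1 (x u : Fin n) :
    (∑ a : Fin n, ∑ b ∈ univ.erase a,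
      (if Equiv.swap a b x = u then (1:ℝ) else 0))
    = if x = u then ((n:ℝ)-1)*((n:ℝ)-2) else 2 := by
  by_cases hxu : x = u
  · subst hxu
    rw [if_pos rfl, ← cnt_fix1 x]
    refine Finset.sum_congr rfl fun a _ => Finset.sum_congr rfl fun b hb => ?_
    have hab : a ≠ b := fun h => (mem_erase.mp hb).1 h.symm
    refine if_congr ?_ rfl rfl
    rw [swapFix_iff hab]
    constructor
    · rintro ⟨h1, h2⟩; exact ⟨fun h => h1 h.symm, fun h => h2 h.symm⟩
    · rintro ⟨h1, h2⟩; exact ⟨fun h => h1 h.symm, fun h => h2 h.symm⟩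
  · rw [if_neg hxu, ← cnt_pair hxu]
    refine Finset.sum_congr rfl fun a _ => Finset.sum_congr rfl fun b hb => ?_
    have hab : a ≠ b := fun h => (mem_erase.mp hb).1 h.symm
    exact if_congr (swapEq_iff hab hxu) rfl rfl

lemma cnt2 {x y u v : Fin n} (hxy : x ≠ y) (huv : u ≠ v) :
    (∑ a : Fin n, ∑ b ∈ univ.erase a,
      (if Equiv.swap a b x = u ∧ Equiv.swap a b y = v then (1:ℝ) else 0))
    = if x = u ∧ y = v then ((n:ℝ)-2)*((n:ℝ)-3)
      else if x = u ∨ y = v then 2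
      else if x = v ∧ y = u then 2 else 0 := by
  by_cases hxu : x = u <;> by_cases hyv : y = v
  · subst hxu; subst hyv
    rw [if_pos ⟨rfl, rfl⟩, ← cnt_fix2 hxy]
    refine Finset.sum_congr rfl fun a _ => Finset.sum_congr rfl fun b hb => ?_
    have hab : a ≠ b := fun h => (mem_erase.mp hb).1 h.symm
    refine if_congr ?_ rfl rfl
    rw [swapFix_iff hab, swapFix_iff hab]
    constructor
    · rintro ⟨⟨h1, h2⟩, ⟨h3, h4⟩⟩
      exact ⟨⟨fun h => h1 h.symm, fun h => h3 h.symm⟩, ⟨fun h => h2 h.symm, fun h => h4 h.symm⟩⟩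
    · rintro ⟨⟨h1, h2⟩, ⟨h3, h4⟩⟩
      exact ⟨⟨fun h => h1 h.symm, fun h => h3 h.symm⟩, ⟨fun h => h2 h.symm, fun h => h4 h.symm⟩⟩
  · -- x = u, y ≠ v : count 2 via pair {y, v}
    subst hxu
    have hcond : ¬(x = x ∧ y = v) := fun h => hyv h.2
    rw [if_neg hcond, if_pos (Or.inl rfl), ← cnt_pair hyv]
    refine Finset.sum_congr rfl fun a _ => Finset.sum_congr rfl fun b hb => ?_
    have hab : a ≠ b := fun h => (mem_erase.mp hb).1 h.symm
    refine if_congr ?_ rfl rfl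
    rw [swapFix_iff hab, swapEq_iff hab hyv]
    constructor
    · rintro ⟨-, h⟩; exact h
    · rintro (⟨rfl, rfl⟩ | ⟨rfl, rfl⟩)
      · exact ⟨⟨fun h => hxy h, fun h => (huv h).elim⟩, Or.inl ⟨rfl, rfl⟩⟩
      · exact ⟨⟨fun h => huv h, fun h => (hxy h).elim⟩, Or.inr ⟨rfl, rfl⟩⟩
  · -- x ≠ u, y = v : count 2 via pair {x, u}
    subst hyv
    have hcond : ¬(x = u ∧ y = y) := fun h => hxu h.1
    rw [if_neg hcond, if_pos (Or.inr rfl), ← cnt_pair hxu]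
    refine Finset.sum_congr rfl fun a _ => Finset.sum_congr rfl fun b hb => ?_
    have hab : a ≠ b := fun h => (mem_erase.mp hb).1 h.symm
    refine if_congr ?_ rfl rfl
    rw [swapFix_iff hab, swapEq_iff hab hxu]
    constructor
    · rintro ⟨h, -⟩; exact h
    · rintro (⟨rfl, rfl⟩ | ⟨rfl, rfl⟩)
      · exact ⟨Or.inl ⟨rfl, rfl⟩, fun h => (hxy h.symm).elim, fun h => huv h.symm⟩
      · exact ⟨Or.inr ⟨rfl, rfl⟩, fun h => (huv h.symm).elim, fun h => hxy h.symm⟩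
  · -- x ≠ u, y ≠ v
    have hcond1 : ¬(x = u ∧ y = v) := fun h => hxu h.1
    have hcond2 : ¬(x = u ∨ y = v) := by rintro (h | h); exacts [hxu h, hyv h]
    rw [if_neg hcond1, if_neg hcond2]
    by_cases hs : x = v ∧ y = u
    · obtain ⟨rfl, rfl⟩ := hs
      rw [if_pos ⟨rfl, rfl⟩, ← cnt_pair hxy]
      refine Finset.sum_congr rfl fun a _ => Finset.sum_congr rfl fun b hb => ?_
      have hab : a ≠ b := fun h => (mem_erase.mp hb).1 h.symm
      refine if_congr ?_ rfl rfl
      rw [swapEq_iff hab hxu, swapEq_iff hab hyv]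
      constructor
      · rintro ⟨h, -⟩; exact h
      · rintro (⟨rfl, rfl⟩ | ⟨rfl, rfl⟩)
        · exact ⟨Or.inl ⟨rfl, rfl⟩, Or.inr ⟨rfl, rfl⟩⟩
        · exact ⟨Or.inr ⟨rfl, rfl⟩, Or.inl ⟨rfl, rfl⟩⟩
    · rw [if_neg hs]
      have : ∀ a : Fin n, ∀ b ∈ univ.erase a,
          (if Equiv.swap a b x = u ∧ Equiv.swap a b y = v then (1:ℝ) else 0) = 0 := by
        intro a b hb
        have hab : a ≠ b := fun h => (mem_erase.mp hb).1 h.symm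
        rw [if_neg]
        rw [swapEq_iff hab hxu, swapEq_iff hab hyv]
        rintro ⟨(⟨ha, hb⟩ | ⟨ha, hb⟩), (⟨hc, hd⟩ | ⟨hc, hd⟩)⟩
        · exact hxy (ha.symm.trans hc)
        · exact hs ⟨ha.symm.trans hc, hd.symm.trans hb⟩
        · exact hs ⟨hb.symm.trans hd, hc.symm.trans ha⟩
        · exact huv (ha.symm.trans hc)
      rw [Finset.sum_congr rfl fun a _ => Finset.sum_congr rfl (this a)]
      simp
end SwapCounts
section Stats
variable {n : ℕ}

noncomputable def Freal (σ : Equiv.Perm (Fin n)) : ℝ :=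
  ∑ i : Fin n, if σ i = i then (1:ℝ) else 0

noncomputable def Hreal (σ : Equiv.Perm (Fin n)) : ℝ :=
  ∑ i : Fin n, if σ i ≠ i ∧ σ (σ i) = i then (1:ℝ) else 0

lemma Freal_def (σ : Equiv.Perm (Fin n)) :
    Freal σ = ∑ i : Fin n, if σ i = i then (1:ℝ) else 0 := rfl

lemma Hreal_def (σ : Equiv.Perm (Fin n)) :
    Hreal σ = ∑ i : Fin n, if σ i ≠ i ∧ σ (σ i) = i then (1:ℝ) else 0 := rfl

lemma fixCount_cast (σ : Equiv.Perm (Fin n)) : (fixCount σ : ℝ) = Freal σ := by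
  rw [fixCount, Finset.card_filter, Freal]
  push_cast
  exact Finset.sum_congr rfl fun i _ => by by_cases h : σ i = i <;> simp [h]

lemma sum_erase_single (σ : Equiv.Perm (Fin n)) (i : Fin n) (P : Fin n → Prop) :
    (∑ j ∈ univ.erase i, if σ i = j ∧ P j then (1:ℝ) else 0)
    = if σ i ≠ i ∧ P (σ i) then 1 else 0 := by
  have hpt : ∀ j, (if σ i = j ∧ P j then (1:ℝ) else 0)
      = if j = σ i then (if P j then (1:ℝ) else 0) else 0 := by
    intro j
    by_cases h1 : σ i = j
    · subst h1; simp
    · rw [if_neg (fun h => h1 h.1), if_neg (fun h : j = σ i => h1 h.symm)]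
  rw [Finset.sum_congr rfl fun j _ => hpt j, Finset.sum_ite_eq' (univ.erase i) (σ i)]
  by_cases hfix : σ i = i
  · rw [if_neg (by simp [hfix]), if_neg (fun h => h.1 hfix)]
  · rw [if_pos (mem_erase.mpr ⟨hfix, mem_univ _⟩)]
    by_cases hp : P (σ i)
    · rw [if_pos hp, if_pos ⟨hfix, hp⟩]
    · rw [if_neg hp, if_neg (fun h => hp h.2)]

lemma nest_comm (f : Fin n → Fin n → ℝ) :
    (∑ i : Fin n, ∑ j ∈ univ.erase i, f i j) = ∑ j : Fin n, ∑ i ∈ univ.erase j, f i j := by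
  have h : ∀ g : Fin n → Fin n → ℝ,
      (∑ i : Fin n, ∑ j ∈ univ.erase i, g i j)
      = ∑ i : Fin n, ∑ j : Fin n, if j ≠ i then g i j else 0 := by
    intro g
    refine Finset.sum_congr rfl fun i _ => ?_
    rw [← Finset.filter_ne' univ i, Finset.sum_filter]
  rw [h f, Finset.sum_comm]
  refine Finset.sum_congr rfl fun j _ => ?_
  rw [← Finset.filter_ne' univ j, Finset.sum_filter]
  exact Finset.sum_congr rfl fun i _ => if_congr ne_comm rfl rfl

lemma sum_fix_ite (σ : Equiv.Perm (Fin n)) (c d : ℝ) :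
    (∑ i : Fin n, if σ i = i then c else d) = Freal σ * c + ((n:ℝ) - Freal σ) * d := by
  have hpt : ∀ i : Fin n, (if σ i = i then c else d)
      = (if σ i = i then (1:ℝ) else 0) * c + (1 - if σ i = i then (1:ℝ) else 0) * d := by
    intro i; by_cases h : σ i = i <;> simp [h]
  rw [Finset.sum_congr rfl fun i _ => hpt i, Finset.sum_add_distrib, ← Finset.sum_mul,
    ← Finset.sum_mul, Finset.sum_sub_distrib, Finset.sum_const, card_univ, Fintype.card_fin,
    ← Freal_def]
  simp

lemma sum_erase_fix (σ : Equiv.Perm (Fin n)) (i : Fin n) :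
    (∑ j ∈ univ.erase i, if σ j = j then (1:ℝ) else 0)
    = Freal σ - (if σ i = i then (1:ℝ) else 0) :=
  Finset.sum_erase_eq_sub (mem_univ i)

lemma sum_erase_one (i : Fin n) : (∑ j ∈ univ.erase i, (1:ℝ)) = (n:ℝ) - 1 := by
  have hn1 : 1 ≤ n := Nat.one_le_iff_ne_zero.mpr (by rintro rfl; exact absurd i.2 (by simp))
  rw [Finset.sum_const, Finset.card_erase_of_mem (mem_univ i), card_univ, Fintype.card_fin,
    nsmul_eq_mul, mul_one]
  push_cast [Nat.cast_sub hn1]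
  ring

lemma ind_sq (σ : Equiv.Perm (Fin n)) (i : Fin n) :
    (if σ i = i then (1:ℝ) else 0) * (if σ i = i then (1:ℝ) else 0)
    = (if σ i = i then (1:ℝ) else 0) := by by_cases h : σ i = i <;> simp [h]

lemma e11 (σ : Equiv.Perm (Fin n)) :
    (∑ i : Fin n, ∑ j ∈ univ.erase i, if σ i = i ∧ σ j = j then (1:ℝ) else 0)
    = Freal σ ^ 2 - Freal σ := by
  have hpt : ∀ i j : Fin n, (if σ i = i ∧ σ j = j then (1:ℝ) else 0)
      = (if σ i = i then (1:ℝ) else 0) * (if σ j = j then (1:ℝ) else 0) := by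
    intro i j; by_cases h1 : σ i = i <;> by_cases h2 : σ j = j <;> simp [h1, h2]
  calc (∑ i : Fin n, ∑ j ∈ univ.erase i, if σ i = i ∧ σ j = j then (1:ℝ) else 0)
      = ∑ i : Fin n, ((if σ i = i then (1:ℝ) else 0) * Freal σ
          - (if σ i = i then (1:ℝ) else 0)) := by
        refine Finset.sum_congr rfl fun i _ => ?_
        rw [Finset.sum_congr rfl fun j _ => hpt i j, ← Finset.mul_sum, sum_erase_fix σ i,
          mul_sub, ind_sq]
    _ = Freal σ ^ 2 - Freal σ := by
        rw [Finset.sum_sub_distrib, ← Finset.sum_mul, ← Freal_def]; ring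

lemma e10 (σ : Equiv.Perm (Fin n)) :
    (∑ i : Fin n, ∑ j ∈ univ.erase i, if σ i = i ∧ σ j ≠ j then (1:ℝ) else 0)
    = Freal σ * ((n:ℝ) - Freal σ) := by
  have hpt : ∀ i j : Fin n, (if σ i = i ∧ σ j ≠ j then (1:ℝ) else 0)
      = (if σ i = i then (1:ℝ) else 0) * (1 - (if σ j = j then (1:ℝ) else 0)) := by
    intro i j; by_cases h1 : σ i = i <;> by_cases h2 : σ j = j <;> simp [h1, h2]
  calc (∑ i : Fin n, ∑ j ∈ univ.erase i, if σ i = i ∧ σ j ≠ j then (1:ℝ) else 0)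
      = ∑ i : Fin n, ((if σ i = i then (1:ℝ) else 0)
          * (((n:ℝ) - 1) - (Freal σ - (if σ i = i then (1:ℝ) else 0)))) := by
        refine Finset.sum_congr rfl fun i _ => ?_
        rw [Finset.sum_congr rfl fun j _ => hpt i j, ← Finset.mul_sum,
          Finset.sum_sub_distrib, sum_erase_one i, sum_erase_fix σ i]
    _ = Freal σ * ((n:ℝ) - Freal σ) := by
        have hexp : ∀ i : Fin n, (if σ i = i then (1:ℝ) else 0)
            * (((n:ℝ) - 1) - (Freal σ - (if σ i = i then (1:ℝ) else 0)))
            = (if σ i = i then (1:ℝ) else 0) * (((n:ℝ) - 1) - Freal σ)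
              + (if σ i = i then (1:ℝ) else 0) := by
          intro i
          have := ind_sq σ i
          nlinarith [ind_sq σ i]
        rw [Finset.sum_congr rfl fun i _ => hexp i, Finset.sum_add_distrib, ← Finset.sum_mul,
          ← Freal_def]
        ring

lemma e01 (σ : Equiv.Perm (Fin n)) :
    (∑ i : Fin n, ∑ j ∈ univ.erase i, if σ i ≠ i ∧ σ j = j then (1:ℝ) else 0)
    = Freal σ * ((n:ℝ) - Freal σ) := by
  rw [nest_comm]
  rw [← e10 σ]
  exact Finset.sum_congr rfl fun j _ => Finset.sum_congr rfl fun i _ =>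
    if_congr and_comm rfl rfl

lemma eswap (σ : Equiv.Perm (Fin n)) :
    (∑ i : Fin n, ∑ j ∈ univ.erase i, if σ i = j ∧ σ j = i then (1:ℝ) else 0)
    = Hreal σ := by
  rw [Hreal_def]
  refine Finset.sum_congr rfl fun i _ => ?_
  convert sum_erase_single σ i (fun j => σ j = i) using 2
  congr!

lemma enswap (σ : Equiv.Perm (Fin n)) :
    (∑ i : Fin n, ∑ j ∈ univ.erase i, if σ i = j ∧ σ j ≠ i then (1:ℝ) else 0)
    = ((n:ℝ) - Freal σ) - Hreal σ := by
  have h1 : ∀ i : Fin n, (∑ j ∈ univ.erase i, if σ i = j ∧ σ j ≠ i then (1:ℝ) else 0)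
      = if σ i ≠ i ∧ σ (σ i) ≠ i then 1 else 0 := by
    intro i
    convert sum_erase_single σ i (fun j => σ j ≠ i) using 2
    congr!
  have hpt : ∀ i : Fin n, (if σ i ≠ i ∧ σ (σ i) ≠ i then (1:ℝ) else 0)
      = (1 - (if σ i = i then (1:ℝ) else 0)) - (if σ i ≠ i ∧ σ (σ i) = i then (1:ℝ) else 0) := by
    intro i
    by_cases hf : σ i = i
    · simp [hf]
    · by_cases hs : σ (σ i) = i <;> simp [hf, hs]
  rw [Finset.sum_congr rfl fun i _ => (h1 i).trans (hpt i), Finset.sum_sub_distrib,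
    Finset.sum_sub_distrib, Finset.sum_const, card_univ, Fintype.card_fin, ← Freal_def,
    ← Hreal_def]
  simp

lemma enswap' (σ : Equiv.Perm (Fin n)) :
    (∑ i : Fin n, ∑ j ∈ univ.erase i, if σ j = i ∧ σ i ≠ j then (1:ℝ) else 0)
    = ((n:ℝ) - Freal σ) - Hreal σ := by
  rw [nest_comm, ← enswap σ]
end Stats
section Big
variable {n : ℕ}

lemma comm4 (f : Fin n → Fin n → Fin n → Fin n → ℝ) :
    (∑ a : Fin n, ∑ b ∈ univ.erase a, ∑ i : Fin n, ∑ j ∈ univ.erase i, f a b i j)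
    = ∑ i : Fin n, ∑ j ∈ univ.erase i, ∑ a : Fin n, ∑ b ∈ univ.erase a, f a b i j := by
  rw [Finset.sum_congr rfl fun a (_ : a ∈ univ) => Finset.sum_comm, Finset.sum_comm]
  refine Finset.sum_congr rfl fun i _ => ?_
  rw [Finset.sum_congr rfl fun a (_ : a ∈ univ) => Finset.sum_comm, Finset.sum_comm]

lemma comm3 (f : Fin n → Fin n → Fin n → ℝ) :
    (∑ a : Fin n, ∑ b ∈ univ.erase a, ∑ i : Fin n, f a b i)
    = ∑ i : Fin n, ∑ a : Fin n, ∑ b ∈ univ.erase a, f a b i := by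
  rw [Finset.sum_congr rfl fun a (_ : a ∈ univ) => Finset.sum_comm, Finset.sum_comm]

lemma bigF (σ : Equiv.Perm (Fin n)) :
    (∑ a : Fin n, ∑ b ∈ univ.erase a, Freal (Equiv.swap a b * σ))
    = ((n:ℝ)-1)*((n:ℝ)-2)*Freal σ + 2*((n:ℝ) - Freal σ) := by
  have h1 : ∀ a b : Fin n, Freal (Equiv.swap a b * σ)
      = ∑ i : Fin n, if Equiv.swap a b (σ i) = i then (1:ℝ) else 0 := by
    intro a b
    rw [Freal_def]
    exact Finset.sum_congr rfl fun i _ =>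
      if_congr (by rw [Equiv.Perm.mul_apply]) rfl rfl
  rw [Finset.sum_congr rfl fun a _ => Finset.sum_congr rfl fun b _ => h1 a b, comm3,
    Finset.sum_congr rfl fun i _ => cnt1 (σ i) i, sum_fix_ite]
  ring

lemma bigF2 (σ : Equiv.Perm (Fin n)) :
    (∑ a : Fin n, ∑ b ∈ univ.erase a, (Freal (Equiv.swap a b * σ))^2)
    = ((n:ℝ)-1)*((n:ℝ)-2)*Freal σ + 2*((n:ℝ) - Freal σ)
      + ((n:ℝ)-2)*((n:ℝ)-3)*(Freal σ^2 - Freal σ) + 4*Freal σ*((n:ℝ)-Freal σ)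
      + 2*Hreal σ := by
  have hsq : ∀ τ : Equiv.Perm (Fin n), (Freal τ)^2
      = Freal τ + ∑ i : Fin n, ∑ j ∈ univ.erase i, (if τ i = i ∧ τ j = j then (1:ℝ) else 0) := by
    intro τ
    have expand : (Freal τ)^2 = ∑ i : Fin n, ∑ j : Fin n,
        (if τ i = i then (1:ℝ) else 0) * (if τ j = j then (1:ℝ) else 0) := by
      rw [sq, Freal_def, Finset.sum_mul_sum]
    rw [expand]
    have inner : ∀ i : Fin n, (∑ j : Fin n,
        (if τ i = i then (1:ℝ) else 0) * (if τ j = j then (1:ℝ) else 0))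
        = (if τ i = i then (1:ℝ) else 0)
          + ∑ j ∈ univ.erase i, (if τ i = i ∧ τ j = j then (1:ℝ) else 0) := by
      intro i
      rw [← Finset.add_sum_erase univ _ (mem_univ i), ind_sq]
      congr 1
      exact Finset.sum_congr rfl fun j _ => by
        by_cases h1 : τ i = i <;> by_cases h2 : τ j = j <;> simp [h1, h2]
    rw [Finset.sum_congr rfl fun i _ => inner i, Finset.sum_add_distrib, ← Freal_def]
  rw [Finset.sum_congr rfl fun a _ => Finset.sum_congr rfl fun b _ =>
      hsq (Equiv.swap a b * σ)]
  rw [Finset.sum_congr rfl fun a (_ : a ∈ univ) => Finset.sum_add_distrib,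
    Finset.sum_add_distrib, bigF σ]
  have h2 : ∀ a b i j : Fin n, (if (Equiv.swap a b * σ) i = i ∧ (Equiv.swap a b * σ) j = j
      then (1:ℝ) else 0)
      = (if Equiv.swap a b (σ i) = i ∧ Equiv.swap a b (σ j) = j then (1:ℝ) else 0) :=
    fun a b i j => if_congr (by rw [Equiv.Perm.mul_apply, Equiv.Perm.mul_apply]) rfl rfl
  rw [Finset.sum_congr rfl fun a _ => Finset.sum_congr rfl fun b _ =>
    Finset.sum_congr rfl fun i _ => Finset.sum_congr rfl fun j _ => h2 a b i j]
  rw [comm4]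
  have h3 : ∀ i : Fin n, ∀ j ∈ univ.erase i,
      (∑ a : Fin n, ∑ b ∈ univ.erase a,
        (if Equiv.swap a b (σ i) = i ∧ Equiv.swap a b (σ j) = j then (1:ℝ) else 0))
      = ((n:ℝ)-2)*((n:ℝ)-3) * (if σ i = i ∧ σ j = j then (1:ℝ) else 0)
        + 2 * (if σ i = i ∧ σ j ≠ j then (1:ℝ) else 0)
        + 2 * (if σ i ≠ i ∧ σ j = j then (1:ℝ) else 0)
        + 2 * (if σ i = j ∧ σ j = i then (1:ℝ) else 0) := by
    intro i j hj
    have hji : j ≠ i := (mem_erase.mp hj).1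
    have hij : i ≠ j := fun h => hji h.symm
    have hxy : σ i ≠ σ j := fun h => hij (σ.injective h)
    rw [cnt2 hxy hij]
    by_cases h1 : σ i = i <;> by_cases h2 : σ j = j
    · have h4 : ¬(σ i = j ∧ σ j = i) := fun h => hij (h1.symm.trans h.1)
      simp [h1, h2, h4, hij, hji]
    · have h4 : ¬(σ i = j ∧ σ j = i) := fun h => hij (h1.symm.trans h.1)
      simp [h1, h2, h4, hij, hji]
    · have h4 : ¬(σ i = j ∧ σ j = i) := fun h => hji (h2.symm.trans h.2)
      simp [h1, h2, h4, hij, hji]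
    · by_cases h4 : σ i = j ∧ σ j = i <;> simp [h1, h2, h4, hij, hji]
  rw [Finset.sum_congr rfl fun i _ => Finset.sum_congr rfl fun j hj => h3 i j hj]
  have splitsum : (∑ i : Fin n, ∑ j ∈ univ.erase i,
      (((n:ℝ)-2)*((n:ℝ)-3) * (if σ i = i ∧ σ j = j then (1:ℝ) else 0)
        + 2 * (if σ i = i ∧ σ j ≠ j then (1:ℝ) else 0)
        + 2 * (if σ i ≠ i ∧ σ j = j then (1:ℝ) else 0)
        + 2 * (if σ i = j ∧ σ j = i then (1:ℝ) else 0)))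
      = ((n:ℝ)-2)*((n:ℝ)-3) * (Freal σ^2 - Freal σ)
        + 2 * (Freal σ * ((n:ℝ) - Freal σ)) + 2 * (Freal σ * ((n:ℝ) - Freal σ))
        + 2 * Hreal σ := by
    rw [Finset.sum_congr rfl (fun i (_ : i ∈ univ) => by
      rw [Finset.sum_add_distrib, Finset.sum_add_distrib, Finset.sum_add_distrib,
        ← Finset.mul_sum, ← Finset.mul_sum, ← Finset.mul_sum, ← Finset.mul_sum])]
    rw [Finset.sum_add_distrib, Finset.sum_add_distrib, Finset.sum_add_distrib,
      ← Finset.mul_sum, ← Finset.mul_sum, ← Finset.mul_sum, ← Finset.mul_sum,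
      e11, e10, e01, eswap]
  rw [splitsum]
  ring
end Big
section BigH
variable {n : ℕ}

lemma bigH (σ : Equiv.Perm (Fin n)) :
    (∑ a : Fin n, ∑ b ∈ univ.erase a, Hreal (Equiv.swap a b * σ))
    = ((n:ℝ)-2)*((n:ℝ)-3)*Hreal σ + 4*(((n:ℝ) - Freal σ) - Hreal σ)
      + 2*(Freal σ^2 - Freal σ) := by
  have h1 : ∀ a b : Fin n, Hreal (Equiv.swap a b * σ)
      = ∑ i : Fin n, ∑ j ∈ univ.erase i,
          (if Equiv.swap a b (σ i) = j ∧ Equiv.swap a b (σ j) = i then (1:ℝ) else 0) := by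
    intro a b
    rw [← eswap (Equiv.swap a b * σ)]
    exact Finset.sum_congr rfl fun i _ => Finset.sum_congr rfl fun j _ =>
      if_congr (by rw [Equiv.Perm.mul_apply, Equiv.Perm.mul_apply]) rfl rfl
  rw [Finset.sum_congr rfl fun a _ => Finset.sum_congr rfl fun b _ => h1 a b, comm4]
  have h3 : ∀ i : Fin n, ∀ j ∈ univ.erase i,
      (∑ a : Fin n, ∑ b ∈ univ.erase a,
        (if Equiv.swap a b (σ i) = j ∧ Equiv.swap a b (σ j) = i then (1:ℝ) else 0))
      = ((n:ℝ)-2)*((n:ℝ)-3) * (if σ i = j ∧ σ j = i then (1:ℝ) else 0)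
        + 2 * (if σ i = j ∧ σ j ≠ i then (1:ℝ) else 0)
        + 2 * (if σ j = i ∧ σ i ≠ j then (1:ℝ) else 0)
        + 2 * (if σ i = i ∧ σ j = j then (1:ℝ) else 0) := by
    intro i j hj
    have hji : j ≠ i := (mem_erase.mp hj).1
    have hij : i ≠ j := fun h => hji h.symm
    have hxy : σ i ≠ σ j := fun h => hij (σ.injective h)
    rw [cnt2 hxy hji]
    by_cases h1 : σ i = j <;> by_cases h2 : σ j = i
    · have h4 : ¬(σ i = i ∧ σ j = j) := fun h => hij (h.1.symm.trans h1)
      simp [h1, h2, h4, hij, hji]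
    · have h4 : ¬(σ i = i ∧ σ j = j) := fun h => hij (h.1.symm.trans h1)
      simp [h1, h2, h4, hij, hji]
    · have h4 : ¬(σ i = i ∧ σ j = j) := fun h => hji (h.2.symm.trans h2)
      simp [h1, h2, h4, hij, hji]
    · by_cases h4 : σ i = i ∧ σ j = j <;> simp [h1, h2, h4, hij, hji]
  rw [Finset.sum_congr rfl fun i _ => Finset.sum_congr rfl fun j hj => h3 i j hj]
  rw [Finset.sum_congr rfl (fun i (_ : i ∈ univ) => by
    rw [Finset.sum_add_distrib, Finset.sum_add_distrib, Finset.sum_add_distrib,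
      ← Finset.mul_sum, ← Finset.mul_sum, ← Finset.mul_sum, ← Finset.mul_sum])]
  rw [Finset.sum_add_distrib, Finset.sum_add_distrib, Finset.sum_add_distrib,
    ← Finset.mul_sum, ← Finset.mul_sum, ← Finset.mul_sum, ← Finset.mul_sum,
    eswap, enswap, enswap', e11]
  ring
end BigH
section Walk
variable {n : ℕ}

lemma nested_eq_offDiag (f : Fin n → Fin n → ℝ) :
    (∑ a : Fin n, ∑ b ∈ univ.erase a, f a b)
    = ∑ p ∈ (univ : Finset (Fin n)).offDiag, f p.1 p.2 := by
  rw [show (univ : Finset (Fin n)).offDiag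
      = (univ ×ˢ univ).filter (fun p => p.1 ≠ p.2) from by ext p; simp [mem_offDiag],
    Finset.sum_filter, Finset.sum_product]
  refine Finset.sum_congr rfl fun a _ => ?_
  rw [← Finset.filter_ne' univ a, Finset.sum_filter]
  exact Finset.sum_congr rfl fun b _ => if_congr ne_comm rfl rfl

lemma two_to_one (f : Equiv.Perm (Fin n) → ℝ) :
    (∑ a : Fin n, ∑ b ∈ univ.erase a, f (Equiv.swap a b))
    = 2 * ∑ τ ∈ univ.filter Equiv.Perm.IsSwap, f τ := by
  rw [nested_eq_offDiag (fun a b => f (Equiv.swap a b))]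
  rw [← Finset.sum_fiberwise_of_maps_to (g := fun p : Fin n × Fin n => Equiv.swap p.1 p.2)
      (t := univ.filter Equiv.Perm.IsSwap)
      (fun p hp => mem_filter.mpr ⟨mem_univ _, ⟨p.1, p.2, (mem_offDiag.mp hp).2.2, rfl⟩⟩)
      (fun p => f (Equiv.swap p.1 p.2))]
  rw [Finset.mul_sum]
  refine Finset.sum_congr rfl fun τ hτ => ?_
  obtain ⟨x, y, hxy, rfl⟩ := (mem_filter.mp hτ).2
  have hfiber : ((univ : Finset (Fin n)).offDiag.filter
      (fun p => Equiv.swap p.1 p.2 = Equiv.swap x y)) = {(x, y), (y, x)} := by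
    ext ⟨a, b⟩
    simp only [mem_filter, mem_offDiag, mem_insert, mem_singleton, Prod.mk.injEq]
    constructor
    · rintro ⟨⟨-, -, hab⟩, heq⟩
      have happ : Equiv.swap a b x = y := by
        rw [heq, Equiv.swap_apply_left]
      rcases (swapEq_iff hab hxy).mp happ with ⟨h1, h2⟩ | ⟨h1, h2⟩
      · exact Or.inl ⟨h1, h2⟩
      · exact Or.inr ⟨h1, h2⟩
    · rintro (⟨rfl, rfl⟩ | ⟨rfl, rfl⟩)
      · exact ⟨⟨mem_univ _, mem_univ _, hxy⟩, rfl⟩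
      · exact ⟨⟨mem_univ _, mem_univ _, fun h => hxy h.symm⟩, Equiv.swap_comm _ _⟩
  rw [hfiber]
  have hne : ((x, y) : Fin n × Fin n) ≠ (y, x) := by
    intro h; exact hxy (congrArg Prod.fst h)
  rw [Finset.sum_insert (by simp [hne]), Finset.sum_singleton, Equiv.swap_comm y x]
  ring

lemma swapsum (hn : 0 < n) (f : Equiv.Perm (Fin n) → ℝ) :
    (∑ τ : Equiv.Perm (Fin n), rtMeasure n τ * f τ)
    = (1/(n:ℝ)) * f 1 + (1/(n:ℝ)^2) *
        ∑ a : Fin n, ∑ b ∈ univ.erase a, f (Equiv.swap a b) := by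
  have hpt : ∀ τ : Equiv.Perm (Fin n), rtMeasure n τ * f τ
      = (if τ = 1 then (1/(n:ℝ)) * f τ else 0)
        + (if τ.IsSwap then (2/(n:ℝ)^2) * f τ else 0) := by
    intro τ
    rw [rtMeasure]
    by_cases h1 : τ = 1
    · have hns : ¬τ.IsSwap := fun hs => isSwap_ne_one hs h1
      rw [if_pos h1, if_pos h1, if_neg hns, add_zero]
    · by_cases h2 : τ.IsSwap <;> simp [h1, h2]
  rw [Finset.sum_congr rfl fun τ _ => hpt τ, Finset.sum_add_distrib,
    Finset.sum_ite_eq' univ (1 : Equiv.Perm (Fin n)) (fun τ => (1/(n:ℝ)) * f τ),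
    if_pos (mem_univ _), ← Finset.sum_filter, ← Finset.mul_sum, two_to_one f]
  ring

lemma step_eq (k : ℕ) (f : Equiv.Perm (Fin n) → ℝ) :
    (∑ g : Equiv.Perm (Fin n), convPow (rtMeasure n) (k+1) g * f g)
    = ∑ h : Equiv.Perm (Fin n), convPow (rtMeasure n) k h *
        ∑ τ : Equiv.Perm (Fin n), rtMeasure n τ * f (τ * h) := by
  have : ∀ g : Equiv.Perm (Fin n), convPow (rtMeasure n) (k+1) g * f g
      = ∑ h : Equiv.Perm (Fin n), rtMeasure n (g * h⁻¹) * convPow (rtMeasure n) k h * f g := by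
    intro g
    rw [show convPow (rtMeasure n) (k+1) g
        = ∑ h : Equiv.Perm (Fin n), rtMeasure n (g * h⁻¹) * convPow (rtMeasure n) k h from rfl,
      Finset.sum_mul]
  rw [Finset.sum_congr rfl fun g _ => this g, Finset.sum_comm]
  refine Finset.sum_congr rfl fun h _ => ?_
  rw [Finset.mul_sum]
  refine Fintype.sum_equiv (Equiv.mulRight h⁻¹) _ _ fun τ => ?_
  simp only [Equiv.coe_mulRight]
  rw [inv_mul_cancel_right]
  ring
end Walk
section Induction
variable {n : ℕ}

lemma conv_zero (P : Equiv.Perm (Fin n) → ℝ) (f : Equiv.Perm (Fin n) → ℝ) :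
    (∑ g : Equiv.Perm (Fin n), convPow P 0 g * f g) = f 1 := by
  have hpt : ∀ g : Equiv.Perm (Fin n), convPow P 0 g * f g = if g = 1 then f g else 0 := by
    intro g
    simp only [convPow]
    by_cases h : g = 1 <;> simp [h]
  rw [Finset.sum_congr rfl fun g _ => hpt g, Finset.sum_ite_eq' univ 1 f, if_pos (mem_univ _)]

lemma Freal_one : Freal (1 : Equiv.Perm (Fin n)) = n := by
  rw [Freal_def]; simp

lemma Hreal_one : Hreal (1 : Equiv.Perm (Fin n)) = 0 := by
  rw [Hreal_def]; simp

lemma sum_pairs_one : (∑ a : Fin n, ∑ b ∈ (univ : Finset (Fin n)).erase a, (1:ℝ))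
    = (n:ℝ) * ((n:ℝ) - 1) := by
  by_cases h : n = 0
  · subst h; simp
  · rw [Finset.sum_congr rfl fun a _ => sum_erase_one a, Finset.sum_const, card_univ,
      Fintype.card_fin, nsmul_eq_mul]

lemma step_all (hn : 0 < n) (k : ℕ) (f : Equiv.Perm (Fin n) → ℝ) :
    (∑ g : Equiv.Perm (Fin n), convPow (rtMeasure n) (k+1) g * f g)
    = ∑ h : Equiv.Perm (Fin n), convPow (rtMeasure n) k h *
        ((1/(n:ℝ)) * f h + (1/(n:ℝ)^2) *
          ∑ a : Fin n, ∑ b ∈ univ.erase a, f (Equiv.swap a b * h)) := by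
  rw [step_eq k f]
  refine Finset.sum_congr rfl fun h _ => ?_
  congr 1
  rw [swapsum hn (fun τ => f (τ * h)), one_mul]

theorem moments (hn : 4 ≤ n) (k : ℕ) :
    (∑ g : Equiv.Perm (Fin n), convPow (rtMeasure n) k g * 1) = 1
  ∧ (∑ g : Equiv.Perm (Fin n), convPow (rtMeasure n) k g * Freal g)
      = 1 + ((n:ℝ)-1) * (1 - 2/(n:ℝ))^k
  ∧ (∑ g : Equiv.Perm (Fin n), convPow (rtMeasure n) k g * (Freal g)^2)
      = 2 + 3*((n:ℝ)-1) * (1 - 2/(n:ℝ))^k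
        + ((n:ℝ)*((n:ℝ)-3)/2) * ((1 - 2/(n:ℝ))^2)^k
        + (((n:ℝ)-1)*((n:ℝ)-2)/2) * (1 - 4/(n:ℝ))^k
  ∧ (∑ g : Equiv.Perm (Fin n), convPow (rtMeasure n) k g * Hreal g)
      = 1 + ((n:ℝ)*((n:ℝ)-3)/2) * ((1 - 2/(n:ℝ))^2)^k
        - (((n:ℝ)-1)*((n:ℝ)-2)/2) * (1 - 4/(n:ℝ))^k := by
  have hn0 : (0:ℕ) < n := by omega
  have hnR : (n:ℝ) ≠ 0 := by positivity
  have hnR4 : (4:ℝ) ≤ (n:ℝ) := by exact_mod_cast hn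
  induction k with
  | zero =>
    refine ⟨?_, ?_, ?_, ?_⟩
    · rw [conv_zero]
    · rw [conv_zero (rtMeasure n) Freal, Freal_one, pow_zero]; ring
    · rw [conv_zero (rtMeasure n) (fun g => (Freal g)^2)]
      rw [Freal_one, pow_zero, pow_zero]; ring
    · rw [conv_zero (rtMeasure n) Hreal, Hreal_one, pow_zero, pow_zero]; ring
  | succ k ih =>
    obtain ⟨ih1, ihF, ihF2, ihH⟩ := ih
    constructor
    · -- constant function
      rw [step_all hn0 k (fun _ => (1:ℝ))]
      have hpt : ∀ h : Equiv.Perm (Fin n), convPow (rtMeasure n) k h *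
          ((1/(n:ℝ)) * 1 + (1/(n:ℝ)^2) *
            ∑ a : Fin n, ∑ b ∈ univ.erase a, (1:ℝ))
          = convPow (rtMeasure n) k h * 1 := by
        intro h
        rw [sum_pairs_one]
        congr 1
        field_simp
        ring
      rw [Finset.sum_congr rfl fun h _ => hpt h, ih1]
    constructor
    · -- Freal
      rw [step_all hn0 k Freal]
      have hpt : ∀ h : Equiv.Perm (Fin n), convPow (rtMeasure n) k h *
          ((1/(n:ℝ)) * Freal h + (1/(n:ℝ)^2) *
            ∑ a : Fin n, ∑ b ∈ univ.erase a, Freal (Equiv.swap a b * h))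
          = (1 - 2/(n:ℝ)) * (convPow (rtMeasure n) k h * Freal h)
            + (2/(n:ℝ)) * (convPow (rtMeasure n) k h * 1) := by
        intro h
        rw [bigF h]
        field_simp
        ring
      rw [Finset.sum_congr rfl fun h _ => hpt h, Finset.sum_add_distrib,
        ← Finset.mul_sum, ← Finset.mul_sum, ihF, ih1, pow_succ]
      field_simp
      ring
    constructor
    · -- Freal squared
      rw [step_all hn0 k (fun g => (Freal g)^2)]
      have hpt : ∀ h : Equiv.Perm (Fin n), convPow (rtMeasure n) k h *
          ((1/(n:ℝ)) * (Freal h)^2 + (1/(n:ℝ)^2) *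
            ∑ a : Fin n, ∑ b ∈ univ.erase a, (Freal (Equiv.swap a b * h))^2)
          = (1 - (4*(n:ℝ)-2)/(n:ℝ)^2) * (convPow (rtMeasure n) k h * (Freal h)^2)
            + ((6*(n:ℝ)-6)/(n:ℝ)^2) * (convPow (rtMeasure n) k h * Freal h)
            + (2/(n:ℝ)^2) * (convPow (rtMeasure n) k h * Hreal h)
            + (2/(n:ℝ)) * (convPow (rtMeasure n) k h * 1) := by
        intro h
        rw [bigF2 h]
        field_simp
        ring
      rw [Finset.sum_congr rfl fun h _ => hpt h, Finset.sum_add_distrib,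
        Finset.sum_add_distrib, Finset.sum_add_distrib,
        ← Finset.mul_sum, ← Finset.mul_sum, ← Finset.mul_sum, ← Finset.mul_sum,
        ihF2, ihF, ihH, ih1, pow_succ, pow_succ, pow_succ]
      rw [show (1 - 2/(n:ℝ)) = ((n:ℝ)-2)/n by rw [sub_div, div_self hnR],
        show (1 - 4/(n:ℝ)) = ((n:ℝ)-4)/n by rw [sub_div, div_self hnR]]
      simp only [div_pow, mul_pow, pow_one]
      field_simp
      ring
    · -- Hreal
      rw [step_all hn0 k Hreal]
      have hpt : ∀ h : Equiv.Perm (Fin n), convPow (rtMeasure n) k h *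
          ((1/(n:ℝ)) * Hreal h + (1/(n:ℝ)^2) *
            ∑ a : Fin n, ∑ b ∈ univ.erase a, Hreal (Equiv.swap a b * h))
          = (1 - (4*(n:ℝ)-2)/(n:ℝ)^2) * (convPow (rtMeasure n) k h * Hreal h)
            + (2/(n:ℝ)^2) * (convPow (rtMeasure n) k h * (Freal h)^2)
            + (-6/(n:ℝ)^2) * (convPow (rtMeasure n) k h * Freal h)
            + (4/(n:ℝ)) * (convPow (rtMeasure n) k h * 1) := by
        intro h
        rw [bigH h]
        field_simp
        ring
      rw [Finset.sum_congr rfl fun h _ => hpt h, Finset.sum_add_distrib,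
        Finset.sum_add_distrib, Finset.sum_add_distrib,
        ← Finset.mul_sum, ← Finset.mul_sum, ← Finset.mul_sum, ← Finset.mul_sum,
        ihH, ihF2, ihF, ih1, pow_succ, pow_succ, pow_succ]
      rw [show (1 - 2/(n:ℝ)) = ((n:ℝ)-2)/n by rw [sub_div, div_self hnR],
        show (1 - 4/(n:ℝ)) = ((n:ℝ)-4)/n by rw [sub_div, div_self hnR]]
      simp only [div_pow, mul_pow, pow_one]
      field_simp
      ring
end Induction

/-- For every `n ≥ 4` and every `k`, the second moment under `P^{*k}` of
`χ(π) = fix(π) − 1` equals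
`1 + (n−1)(1−2/n)^k + (1/2)n(n−3)(1−2/n)^{2k} + (1/2)(n−1)(n−2)(1−4/n)^k`. -/
theorem stmt3 (n : ℕ) (hn : 4 ≤ n) (k : ℕ) :
    ∑ π : Equiv.Perm (Fin n), convPow (rtMeasure n) k π * ((fixCount π : ℝ) - 1) ^ 2 =
      1 + ((n : ℝ) - 1) * (1 - 2 / n) ^ k
        + (1 / 2 : ℝ) * n * ((n : ℝ) - 3) * (1 - 2 / n) ^ (2 * k)
        + (1 / 2 : ℝ) * ((n : ℝ) - 1) * ((n : ℝ) - 2) * (1 - 4 / n) ^ k := by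
  obtain ⟨h1, hF, hF2, hH⟩ := moments hn k
  have hpt : ∀ π : Equiv.Perm (Fin n),
      convPow (rtMeasure n) k π * ((fixCount π : ℝ) - 1) ^ 2
      = convPow (rtMeasure n) k π * (Freal π)^2
        - 2 * (convPow (rtMeasure n) k π * Freal π)
        + convPow (rtMeasure n) k π * 1 := by
    intro π
    rw [fixCount_cast]
    ring
  rw [Finset.sum_congr rfl fun π _ => hpt π, Finset.sum_add_distrib,
    Finset.sum_sub_distrib, ← Finset.mul_sum, hF2, hF, h1, ← pow_mul]
  ring
end

section
/- For every integer n ≥ 3, every real c ≥ 0, and every natural number k with k ≤ (1/2) n log n − c n, one has (n − 1)(1 − 2/n)^k ≥ (2/27) e^{2c}. -/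
set_option maxHeartbeats 1000000

/-- For every `n ≥ 3`, every `c ≥ 0`, and every natural number `k` with
`k ≤ (1/2) n log n − c n`, one has `(n − 1)(1 − 2/n)^k ≥ (2/27) e^{2c}`. -/
theorem stmt4 (n : ℕ) (hn : 3 ≤ n) (c : ℝ) (hc : 0 ≤ c) (k : ℕ)
    (hk : (k : ℝ) ≤ (1 / 2 : ℝ) * n * Real.log n - c * n) :
    ((n : ℝ) - 1) * (1 - 2 / n) ^ k ≥ (2 / 27 : ℝ) * Real.exp (2 * c) := by
  have hn3 : (3:ℝ) ≤ (n:ℝ) := by exact_mod_cast hn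
  set N : ℝ := (n:ℝ) with hN
  have hNpos : 0 < N := by linarith
  have hN2 : 0 < N - 2 := by linarith
  have hx0 : (0:ℝ) < 1 - 2/N := by
    rw [sub_pos, div_lt_one hNpos]; linarith
  have hx1 : 1 - 2/N < 1 := by
    have : 0 < 2/N := by positivity
    linarith
  set L : ℝ := Real.log (1 - 2/N) with hL
  have hLneg : L < 0 := Real.log_neg hx0 hx1
  have h1 : L ≤ -(2/N) := by
    have := Real.log_le_sub_one_of_pos hx0
    rw [← hL] at this; linarith
  have h2 : -(2/(N-2)) ≤ L := by
    have hinv : Real.log (1-2/N)⁻¹ ≤ (1-2/N)⁻¹ - 1 :=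
      Real.log_le_sub_one_of_pos (by positivity)
    rw [Real.log_inv, ← hL] at hinv
    have heq : (1-2/N)⁻¹ - 1 = 2/(N-2) := by
      field_simp; ring
    rw [heq] at hinv; linarith
  have hlogN : 0 < Real.log N := Real.log_pos (by linarith)
  -- rewrite the power as an exponential
  have hxk : (1-2/N)^k = Real.exp ((k:ℝ) * L) := by
    rw [hL, Real.exp_nat_mul, Real.exp_log hx0]
  -- log 3 ≥ 1
  have hlog3 : (1:ℝ) ≤ Real.log 3 := by
    rw [Real.le_log_iff_exp_le (by norm_num)]
    have := Real.exp_one_lt_d9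
    linarith
  -- log N ≤ (N-2) log 3
  have hlogN3 : Real.log N ≤ (N - 2) * Real.log 3 := by
    have h3 : Real.log N = Real.log 3 + Real.log (N/3) := by
      rw [← Real.log_mul (by norm_num) (by positivity)]
      congr 1; field_simp
    have h4 : Real.log (N/3) ≤ N/3 - 1 := Real.log_le_sub_one_of_pos (by positivity)
    have h5 : N/3 - 1 ≤ (N - 3) * Real.log 3 := by
      nlinarith [hlog3, hn3]
    nlinarith [hlog3]
  -- key lower bound on k*L
  have hkL : -(Real.log N) - 2 * Real.log 3 + 2*c ≤ (k:ℝ) * L := by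
    have hK : (k:ℝ) * L ≥ ((1/2:ℝ) * N * Real.log N - c * N) * L := by
      have := mul_le_mul_of_nonpos_right hk (le_of_lt hLneg)
      linarith
    have hA : ((1/2:ℝ) * N * Real.log N) * L ≥ -(N * Real.log N/(N-2)) := by
      have hpos : 0 ≤ (1/2:ℝ) * N * Real.log N := by positivity
      have := mul_le_mul_of_nonneg_left h2 hpos
      have heq : (1/2:ℝ) * N * Real.log N * -(2/(N-2)) = -(N * Real.log N/(N-2)) := by
        field_simp
      linarith [heq ▸ this]
    have hB : (-(c * N)) * L ≥ 2*c := by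
      have := mul_le_mul_of_nonneg_left h1 (mul_nonneg hc (le_of_lt hNpos))
      have heq : c * N * -(2/N) = -(2*c) := by field_simp
      nlinarith
    have hC : N * Real.log N/(N-2) ≤ Real.log N + 2 * Real.log 3 := by
      have : N * Real.log N/(N-2) = Real.log N + 2 * Real.log N/(N-2) := by
        field_simp; ring
      rw [this]
      have : 2 * Real.log N/(N-2) ≤ 2 * Real.log 3 := by
        rw [div_le_iff₀ hN2]
        nlinarith [hlogN3]
      linarith
    linarith [hK, hA, hB, hC]
  -- conclude
  rw [hxk]
  have hstep : Real.exp ((k:ℝ) * L) ≥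
      Real.exp (-(Real.log N)) * Real.exp (- (2 * Real.log 3)) * Real.exp (2*c) := by
    rw [← Real.exp_add, ← Real.exp_add]
    exact Real.exp_le_exp.mpr (by linarith)
  have e1 : Real.exp (-(Real.log N)) = 1/N := by
    rw [Real.exp_neg, Real.exp_log hNpos]; ring
  have e2 : Real.exp (-(2 * Real.log 3)) = 1/9 := by
    rw [Real.exp_neg]
    have : Real.exp (2 * Real.log 3) = 9 := by
      rw [two_mul, Real.exp_add, Real.exp_log (by norm_num : (0:ℝ) < 3)]; norm_num
    rw [this]; norm_num
  rw [e1, e2] at hstep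
  have hfrac : (2/27 : ℝ) ≤ (N - 1) * (1/N * (1/9)) := by
    have h : (N - 1) * (1/N * (1/9)) = (N-1)/(9*N) := by ring
    rw [h, le_div_iff₀ (by positivity)]
    linarith
  have hexp : 0 < Real.exp (2*c) := Real.exp_pos _
  calc (N - 1) * Real.exp ((k:ℝ)*L) ≥ (N-1) * (1/N * (1/9) * Real.exp (2*c)) := by
        apply mul_le_mul_of_nonneg_left hstep (by linarith)
    _ ≥ 2/27 * Real.exp (2*c) := by nlinarith [hfrac, hexp]
end
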